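/- arXiv:cs/0203003 — 18 statements merged into one kernel-verified Lean document; each statement's English description precedes it below -/
import Mathlib

section
/- Let C : Set L → Set L be an operation. The following are equivalent: (1) there exists an antitonic operator S : Set L → Set L such that C(X) = Cn(X ∪ S(X)) for every X ⊆ L; (2) for every X ⊆ L, C(X) = Cn(X ∪ ⋂_{Y ⊆ X} C(Y)); (3) C is supraclassical, left-absorbing, deductive and compact. -/
open Set

namespace DedNonmon

variable {L : Type*}

/-- `Cn X ⊆ C X` for all `X`. -/
def Supra (Cn C : Set L → Set L) : Prop := ∀ X : Set L, Cn X ⊆ C X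

/-- `Cn (C X) = C X` for all `X`. -/
def LeftAb (Cn C : Set L → Set L) : Prop := ∀ X : Set L, Cn (C X) = C X

/-- `Cn X = Cn Y` implies `C X = C Y`. -/
def RightAb (Cn C : Set L → Set L) : Prop := ∀ X Y : Set L, Cn X = Cn Y → C X = C Y

/-- `Y ⊆ X` implies `C X ⊆ Cn (X ∪ C Y)`. -/
def Deduc (Cn C : Set L → Set L) : Prop := ∀ X Y : Set L, Y ⊆ X → C X ⊆ Cn (X ∪ C Y)

/-- `X ⊆ Y` implies `C Y ⊆ C X`. -/
def Antitonic (C : Set L → Set L) : Prop := ∀ X Y : Set L, X ⊆ Y → C Y ⊆ C X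

/-- `Y ⊆ Cn (C X)` implies `Cn (C (X ∪ Y)) = Cn (C X)`. -/
def Cumul (Cn C : Set L → Set L) : Prop :=
  ∀ X Y : Set L, Y ⊆ Cn (C X) → Cn (C (X ∪ Y)) = Cn (C X)

/-- Compactness for (possibly nonmonotonic) operations. -/
def CompactOp (C : Set L → Set L) : Prop :=
  ∀ (X : Set L) (x : L), x ∈ C X →
    ∃ A : Set L, A.Finite ∧ A ⊆ X ∧ ∀ Y : Set L, A ⊆ Y → Y ⊆ X → x ∈ C Y

/-- Supracompactness (Freund). -/
def SupracompactOp (C : Set L → Set L) : Prop :=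
  ∀ (X : Set L) (x : L), x ∈ C X →
    ∃ A : Set L, A.Finite ∧ A ⊆ X ∧ ∀ Y : Set L, A ⊆ Y → Y ⊆ C X → x ∈ C Y

/-- Strong co-compactness. -/
def StrongCoCompact (C : Set L → Set L) : Prop :=
  ∀ (X : Set L) (x : L), x ∉ C X → ∃ A : Set L, A.Finite ∧ A ⊆ X ∧ x ∉ C A

/-- Co-compactness. -/
def CoCompact (Cn C : Set L → Set L) : Prop :=
  ∀ (X : Set L) (x : L), x ∉ C X → ∃ A : Set L, A.Finite ∧ A ⊆ Cn X ∧ x ∉ C A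

/-- Finitary supraclassicality. -/
def FinSupra (Cn F : Set L → Set L) : Prop := ∀ A : Set L, A.Finite → Cn A ⊆ F A

/-- Finitary left absorption. -/
def FinLeftAb (Cn F : Set L → Set L) : Prop := ∀ A : Set L, A.Finite → Cn (F A) = F A

/-- Finitary right absorption. -/
def FinRightAb (Cn F : Set L → Set L) : Prop :=
  ∀ A B : Set L, A.Finite → B.Finite → Cn A = Cn B → F A = F B

/-- Finitary deductivity. -/
def FinDeduc (Cn F : Set L → Set L) : Prop :=
  ∀ A B : Set L, A.Finite → B.Finite → B ⊆ A → F A ⊆ Cn (A ∪ F B)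

/-- Finitary cumulativity. -/
def FinCumul (Cn F : Set L → Set L) : Prop :=
  ∀ A B : Set L, A.Finite → B.Finite → B ⊆ Cn (F A) → Cn (F (A ∪ B)) = Cn (F A)

theorem stmt0 (Cn C : Set L → Set L)
    (hIncl : ∀ X : Set L, X ⊆ Cn X)
    (hMono : ∀ X Y : Set L, X ⊆ Y → Cn X ⊆ Cn Y)
    (hIdem : ∀ X : Set L, Cn (Cn X) = Cn X)
    (hCnCpt : ∀ (X : Set L) (x : L), x ∈ Cn X → ∃ A : Set L, A.Finite ∧ A ⊆ X ∧ x ∈ Cn A)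
    (hImp : ∃ imp : L → L → L, ∀ (a b : L) (X : Set L), b ∈ Cn (X ∪ {a}) ↔ imp a b ∈ Cn X)
 :
    ((∃ S : Set L → Set L, Antitonic S ∧ ∀ X : Set L, C X = Cn (X ∪ S X)) ↔
        ∀ X : Set L, C X = Cn (X ∪ ⋂ (Y : Set L) (_ : Y ⊆ X), C Y)) ∧
    ((∀ X : Set L, C X = Cn (X ∪ ⋂ (Y : Set L) (_ : Y ⊆ X), C Y)) ↔
        (Supra Cn C ∧ LeftAb Cn C ∧ Deduc Cn C ∧ CompactOp C)) := by
  obtain ⟨imp, himp⟩ := hImp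
  set D : Set L → Set L := fun X => ⋂ (Y : Set L) (_ : Y ⊆ X), C Y with hD
  have hDmem : ∀ X x, x ∈ D X ↔ ∀ Y : Set L, Y ⊆ X → x ∈ C Y := by
    intro X x; simp [hD]
  have hDsub : ∀ X, D X ⊆ C X := fun X x hx => (hDmem X x).1 hx X subset_rfl
  have hDanti : ∀ X Y : Set L, X ⊆ Y → D Y ⊆ D X := by
    intro X Y hXY x hx
    rw [hDmem] at *
    exact fun Z hZ => hx Z (hZ.trans hXY)
  -- iterated implication lemma
  have key : ∀ (l : List L) (b : L) (X : Set L),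
      b ∈ Cn (X ∪ {a | a ∈ l}) ↔ List.foldl (fun c a => imp a c) b l ∈ Cn X := by
    intro l
    induction l with
    | nil =>
        intro b X
        simp only [List.not_mem_nil, setOf_false, union_empty, List.foldl_nil]
    | cons a l ih =>
        intro b X
        have hset : (X ∪ {x | x ∈ a :: l}) = (X ∪ {x | x ∈ l}) ∪ {a} := by
          ext y
          simp only [mem_union, mem_setOf_eq, List.mem_cons, mem_singleton_iff]
          tauto
        rw [hset, himp a b (X ∪ {x | x ∈ l}), ih (imp a b) X]
        rfl
  constructor
  · constructor
    · rintro ⟨S, hSanti, hS⟩ X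
      have hSsubD : S X ⊆ D X := by
        intro s hs
        rw [hDmem]
        intro Y hY
        rw [hS]
        exact hIncl _ (Or.inr (hSanti Y X hY hs))
      apply Subset.antisymm
      · rw [hS]
        exact hMono _ _ (union_subset_union_right X hSsubD)
      · have hXC : X ⊆ C X := by
          rw [hS]; exact fun y hy => hIncl _ (Or.inl hy)
        have h1 : X ∪ D X ⊆ C X := union_subset hXC (hDsub X)
        calc Cn (X ∪ D X) ⊆ Cn (C X) := hMono _ _ h1
          _ = C X := by rw [hS, hIdem]
    · intro h
      exact ⟨D, fun X Y hXY => hDanti X Y hXY, fun X => h X⟩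
  · constructor
    · intro h
      refine ⟨?_, ?_, ?_, ?_⟩
      · intro X
        rw [h X]
        exact hMono _ _ subset_union_left
      · intro X
        rw [h X, hIdem]
      · intro X Y hYX
        rw [h X]
        exact hMono _ _ (union_subset_union_right X
          (fun d hd => (hDmem X d).1 hd Y hYX))
      · intro X x hx
        rw [h X] at hx
        obtain ⟨B, hBfin, hBsub, hxB⟩ := hCnCpt _ _ hx
        refine ⟨B ∩ X, hBfin.subset inter_subset_left, inter_subset_right, ?_⟩
        intro Y hAY hYX
        rw [h Y]
        refine hMono B _ ?_ hxB
        intro b hb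
        rcases hBsub hb with hbX | hbD
        · exact Or.inl (hAY ⟨hb, hbX⟩)
        · exact Or.inr (hDanti Y X hYX hbD)
    · rintro ⟨hSup, hLA, hDed, hCpt⟩ X
      have hXC : ∀ Z : Set L, Z ⊆ C Z := fun Z => (hIncl Z).trans (hSup Z)
      apply Subset.antisymm
      · intro x hx
        obtain ⟨A, hAfin, hAX, hA⟩ := hCpt X x hx
        obtain ⟨l, hl⟩ : ∃ l : List L, {a | a ∈ l} = A := by
          refine ⟨hAfin.toFinset.toList, ?_⟩
          ext a
          simp [Finset.mem_toList, hAfin.mem_toFinset]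
        set φ : L := List.foldl (fun c a => imp a c) x l with hφ
        have hφD : φ ∈ D X := by
          rw [hDmem]
          intro Y hYX
          have hxYA : x ∈ C (Y ∪ A) :=
            hA (Y ∪ A) subset_union_right (union_subset hYX hAX)
          have h1 : x ∈ Cn ((Y ∪ A) ∪ C Y) := hDed (Y ∪ A) Y subset_union_left hxYA
          have h2 : x ∈ Cn (C Y ∪ A) := by
            refine hMono _ _ ?_ h1
            intro y hy
            rcases hy with (hy | hy) | hy
            · exact Or.inl (hXC Y hy)
            · exact Or.inr hy
            · exact Or.inl hy
          rw [← hl] at h2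
          have := (key l x (C Y)).1 h2
          rw [← hφ, hLA Y] at this
          exact this
        have hφCn : φ ∈ Cn (X ∪ D X) := hIncl _ (Or.inr hφD)
        have := (key l x (X ∪ D X)).2 (by rw [← hφ]; exact hφCn)
        refine hMono _ _ ?_ this
        rw [hl]
        exact union_subset subset_rfl (fun a ha => Or.inl (hAX ha))
      · have h1 : X ∪ D X ⊆ C X := union_subset (hXC X) (hDsub X)
        calc Cn (X ∪ D X) ⊆ Cn (C X) := hMono _ _ h1
          _ = C X := hLA X

end DedNonmon
end

section
/- If C : Set L → Set L satisfies C(X) = Cn(X ∪ S(X)) for every X ⊆ L, where S : Set L → Set L is antitonic, then C is supraclassical, left-absorbing, deductive and compact. -/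
open Set

namespace DedNonmon

variable {L : Type*}

theorem stmt1 (Cn C S : Set L → Set L)
    (hIncl : ∀ X : Set L, X ⊆ Cn X)
    (hMono : ∀ X Y : Set L, X ⊆ Y → Cn X ⊆ Cn Y)
    (hIdem : ∀ X : Set L, Cn (Cn X) = Cn X)
    (hCnCpt : ∀ (X : Set L) (x : L), x ∈ Cn X → ∃ A : Set L, A.Finite ∧ A ⊆ X ∧ x ∈ Cn A)
    (hS : Antitonic S)
    (hC : ∀ X : Set L, C X = Cn (X ∪ S X)) :
    Supra Cn C ∧ LeftAb Cn C ∧ Deduc Cn C ∧ CompactOp C := by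
  refine ⟨?_, ?_, ?_, ?_⟩
  · intro X
    rw [hC]
    exact hMono _ _ (subset_union_left)
  · intro X
    rw [hC, hIdem]
  · intro X Y hYX
    rw [hC]
    have h1 : X ∪ S X ⊆ Cn (X ∪ C Y) := by
      apply union_subset
      · exact (subset_union_left).trans (hIncl _)
      · have : S X ⊆ C Y := by
          rw [hC]
          exact (hS Y X hYX).trans ((subset_union_right).trans (hIncl _))
        exact (this.trans subset_union_right).trans (hIncl _)
    have := hMono _ _ h1
    rwa [hIdem] at this
  · intro X x hx
    rw [hC] at hx
    obtain ⟨A, hAfin, hAsub, hxA⟩ := hCnCpt _ _ hx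
    refine ⟨A ∩ X, hAfin.inter_of_left _, inter_subset_right, ?_⟩
    intro Y hAY hYX
    rw [hC]
    have hA : A ⊆ Y ∪ S Y := by
      intro a ha
      rcases hAsub ha with h | h
      · exact Or.inl (hAY ⟨ha, h⟩)
      · exact Or.inr (hS Y X hYX h)
    exact hMono _ _ hA hxA

end DedNonmon
end

section
/- If C : Set L → Set L is supraclassical, left-absorbing, deductive and compact, then for every X ⊆ L, C(X) = Cn(X ∪ ⋂_{Y ⊆ X} C(Y)). -/
open Set

namespace DedNonmon

variable {L : Type*}

theorem stmt2 (Cn C : Set L → Set L)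
    (hIncl : ∀ X : Set L, X ⊆ Cn X)
    (hMono : ∀ X Y : Set L, X ⊆ Y → Cn X ⊆ Cn Y)
    (hIdem : ∀ X : Set L, Cn (Cn X) = Cn X)
    (hCnCpt : ∀ (X : Set L) (x : L), x ∈ Cn X → ∃ A : Set L, A.Finite ∧ A ⊆ X ∧ x ∈ Cn A)
    (hImp : ∃ imp : L → L → L, ∀ (a b : L) (X : Set L), b ∈ Cn (X ∪ {a}) ↔ imp a b ∈ Cn X)
    (hSup : Supra Cn C) (hLA : LeftAb Cn C) (hDed : Deduc Cn C) (hCpt : CompactOp C) :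
    ∀ X : Set L, C X = Cn (X ∪ ⋂ (Y : Set L) (_ : Y ⊆ X), C Y) := by

  obtain ⟨imp, himp⟩ := hImp
  intro X
  have main : ∀ (A : Set L), A.Finite → ∀ x : L,
      (∀ Y : Set L, Y ⊆ X → x ∈ Cn (C Y ∪ A)) →
      ∃ t : L, (∀ Y : Set L, Y ⊆ X → t ∈ C Y) ∧ ∀ Z : Set L, x ∈ Cn (Z ∪ A ∪ {t}) := by
    intro A hAfin
    refine Set.Finite.induction_on A hAfin ?_ ?_
    · intro x hx
      refine ⟨x, fun Y hY => ?_, fun Z => ?_⟩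
      · have := hx Y hY
        rw [union_empty, hLA] at this
        exact this
      · exact hIncl _ (Or.inr rfl)
    · intro a s ha hsfin ih x hx
      have hx' : ∀ Y : Set L, Y ⊆ X → imp a x ∈ Cn (C Y ∪ s) := by
        intro Y hY
        have h0 := hx Y hY
        rw [← himp]
        have heq : C Y ∪ insert a s = (C Y ∪ s) ∪ {a} := by
          rw [union_insert, union_singleton]
        rw [heq] at h0; exact h0
      obtain ⟨t, ht1, ht2⟩ := ih (imp a x) hx'
      refine ⟨t, ht1, fun Z => ?_⟩
      have h1 : imp a x ∈ Cn (Z ∪ s ∪ {t}) := ht2 Z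
      have h2 : x ∈ Cn ((Z ∪ s ∪ {t}) ∪ {a}) := (himp a x _).2 h1
      refine hMono _ _ ?_ h2
      intro z hz; simp at hz ⊢; tauto
  apply Subset.antisymm
  · intro x hx
    obtain ⟨A, hAfin, hAX, hA⟩ := hCpt X x hx
    have key : ∀ Y : Set L, Y ⊆ X → x ∈ Cn (C Y ∪ A) := by
      intro Y hY
      have h1 : x ∈ C (Y ∪ A) := hA (Y ∪ A) subset_union_right (union_subset hY hAX)
      have h2 := hDed (Y ∪ A) Y subset_union_left h1
      have h3 : (Y ∪ A) ∪ C Y ⊆ Cn (C Y ∪ A) := by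
        intro z hz
        rcases hz with (hz | hz) | hz
        · exact hIncl _ (Or.inl (hSup Y (hIncl Y hz)))
        · exact hIncl _ (Or.inr hz)
        · exact hIncl _ (Or.inl hz)
      have h4 := hMono _ _ h3 h2
      rw [hIdem] at h4
      exact h4
    obtain ⟨t, ht1, ht2⟩ := main A hAfin x key
    have h1 : x ∈ Cn (∅ ∪ A ∪ {t}) := ht2 ∅
    refine hMono _ _ ?_ h1
    intro z hz
    simp only [empty_union, mem_union, mem_singleton_iff] at hz
    rcases hz with hz | hz
    · exact Or.inl (hAX hz)
    · subst hz
      exact Or.inr (mem_iInter₂.2 fun Y hY => ht1 Y hY)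
  · have h1 : X ∪ ⋂ (Y : Set L) (_ : Y ⊆ X), C Y ⊆ C X := by
      intro z hz
      rcases hz with hz | hz
      · exact hSup X (hIncl X hz)
      · exact mem_iInter₂.1 hz X (subset_refl X)
    intro z hz
    have h2 := hMono _ _ h1 hz
    rw [hLA] at h2
    exact h2

end DedNonmon
end

section
/- If S : Set L → Set L is antitonic and the operation C defined by C(X) = Cn(X ∪ S(X)) satisfies this equation for all X ⊆ L, then for every X ⊆ L, S(X) ⊆ ⋂_{Y ⊆ X} C(Y). In other words, ⋂_{Y ⊆ X} C(Y) is the largest antitonic operator representing C. -/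
open Set

namespace DedNonmon

variable {L : Type*}

theorem stmt3 (Cn C S : Set L → Set L)
    (hIncl : ∀ X : Set L, X ⊆ Cn X)
    (hMono : ∀ X Y : Set L, X ⊆ Y → Cn X ⊆ Cn Y)
    (hIdem : ∀ X : Set L, Cn (Cn X) = Cn X)
    (hCnCpt : ∀ (X : Set L) (x : L), x ∈ Cn X → ∃ A : Set L, A.Finite ∧ A ⊆ X ∧ x ∈ Cn A)
    (hS : Antitonic S)
    (hC : ∀ X : Set L, C X = Cn (X ∪ S X)) :
    ∀ X : Set L, S X ⊆ ⋂ (Y : Set L) (_ : Y ⊆ X), C Y := by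
  intro X x hx
  simp only [mem_iInter]
  intro Y hY
  rw [hC]
  exact hIncl _ (Or.inr (hS Y X hY hx))

end DedNonmon
end

section
/- Let C : Set L → Set L be an operation. The following are equivalent: (1) there exists an antitonic and right-absorbing operator S : Set L → Set L such that C(X) = Cn(X ∪ S(X)) for every X ⊆ L; (2) for every X ⊆ L, C(X) = Cn(X ∪ ⋂_{Y : Y ⊆ Cn(X)} C(Y)); (3) C is supraclassical, left-absorbing, right-absorbing, deductive and compact. -/
open Set

namespace DedNonmon

variable {L : Type*}

theorem stmt4 (Cn C : Set L → Set L)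
    (hIncl : ∀ X : Set L, X ⊆ Cn X)
    (hMono : ∀ X Y : Set L, X ⊆ Y → Cn X ⊆ Cn Y)
    (hIdem : ∀ X : Set L, Cn (Cn X) = Cn X)
    (hCnCpt : ∀ (X : Set L) (x : L), x ∈ Cn X → ∃ A : Set L, A.Finite ∧ A ⊆ X ∧ x ∈ Cn A)
    (hImp : ∃ imp : L → L → L, ∀ (a b : L) (X : Set L), b ∈ Cn (X ∪ {a}) ↔ imp a b ∈ Cn X)
 :
    ((∃ S : Set L → Set L, Antitonic S ∧ RightAb Cn S ∧ ∀ X : Set L, C X = Cn (X ∪ S X)) ↔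
        ∀ X : Set L, C X = Cn (X ∪ ⋂ (Y : Set L) (_ : Y ⊆ Cn X), C Y)) ∧
    ((∀ X : Set L, C X = Cn (X ∪ ⋂ (Y : Set L) (_ : Y ⊆ Cn X), C Y)) ↔
        (Supra Cn C ∧ LeftAb Cn C ∧ RightAb Cn C ∧ Deduc Cn C ∧ CompactOp C)) := by

  classical
  obtain ⟨imp, himp⟩ := hImp
  have hCn_le : ∀ {X Y : Set L}, X ⊆ Cn Y → Cn X ⊆ Cn Y := by
    intro X Y h
    have := hMono X (Cn Y) h
    rwa [hIdem] at this
  -- the candidate operator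
  set D : Set L → Set L := fun X => ⋂ (Y : Set L) (_ : Y ⊆ Cn X), C Y with hDdef
  have hDmem : ∀ (X : Set L) (x : L), x ∈ D X ↔ ∀ Y : Set L, Y ⊆ Cn X → x ∈ C Y := by
    intro X x
    simp [hDdef, Set.mem_iInter]
  -- D is antitone relative to Cn
  have hDanti : ∀ X Y : Set L, Cn X ⊆ Cn Y → D Y ⊆ D X := by
    intro X Y h x hx
    rw [hDmem] at hx ⊢
    intro Z hZ
    exact hx Z (hZ.trans h)
  -- deduction theorem for finite sets
  have hdedF : ∀ (A : Finset L) (x : L), ∃ t : L, ∀ W : Set L,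
      (x ∈ Cn (W ∪ ↑A) ↔ t ∈ Cn W) := by
    intro A
    induction A using Finset.induction_on with
    | empty => intro x; exact ⟨x, fun W => by simp⟩
    | @insert a s ha ih =>
        intro x
        obtain ⟨t, ht⟩ := ih x
        refine ⟨imp a t, fun W => ?_⟩
        have hset : W ∪ (↑(insert a s) : Set L) = (W ∪ {a}) ∪ ↑s := by
          ext y; simp; tauto
        rw [hset, ht (W ∪ {a})]
        exact himp a t W
  have hded : ∀ (A : Set L), A.Finite → ∀ x : L, ∃ t : L, ∀ W : Set L,
      (x ∈ Cn (W ∪ A) ↔ t ∈ Cn W) := by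
    intro A hA x
    obtain ⟨t, ht⟩ := hdedF hA.toFinset x
    refine ⟨t, fun W => ?_⟩
    rw [← hA.coe_toFinset]
    exact ht W
  -- (1) → (2)
  have h12 : (∃ S : Set L → Set L, Antitonic S ∧ RightAb Cn S ∧
      ∀ X : Set L, C X = Cn (X ∪ S X)) → ∀ X : Set L, C X = Cn (X ∪ D X) := by
    rintro ⟨S, hAnt, hRA, hCS⟩ X
    have hXC : X ⊆ C X := by
      rw [hCS X]
      exact Set.subset_union_left.trans (hIncl _)
    have hS_sub_D : S X ⊆ D X := by
      intro x hx
      rw [hDmem]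
      intro Y hY
      have h1 : S X = S (Cn X) := hRA X (Cn X) (hIdem X).symm
      have h2 : S (Cn X) ⊆ S Y := hAnt Y (Cn X) hY
      have h3 : S Y ⊆ C Y := by
        rw [hCS Y]
        exact Set.subset_union_right.trans (hIncl _)
      exact h3 (h2 (h1 ▸ hx))
    have hD_sub_C : D X ⊆ C X := by
      intro x hx
      exact (hDmem X x).mp hx X (hIncl X)
    apply Set.Subset.antisymm
    · rw [hCS X]
      exact hMono _ _ (Set.union_subset_union_right X hS_sub_D)
    · have : Cn (X ∪ D X) ⊆ Cn (C X) :=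
        hMono _ _ (Set.union_subset hXC hD_sub_C)
      rw [hCS X, hIdem] at this
      rw [hCS X]
      exact this
  -- (2) → (1)
  have h21 : (∀ X : Set L, C X = Cn (X ∪ D X)) →
      ∃ S : Set L → Set L, Antitonic S ∧ RightAb Cn S ∧
        ∀ X : Set L, C X = Cn (X ∪ S X) := by
    intro h2
    refine ⟨D, ?_, ?_, h2⟩
    · intro X Y hXY
      exact hDanti X Y (hMono X Y hXY)
    · intro X Y h
      apply Set.Subset.antisymm
      · exact hDanti Y X h.ge
      · exact hDanti X Y h.le
  -- (2) → (3)
  have h23 : (∀ X : Set L, C X = Cn (X ∪ D X)) →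
      Supra Cn C ∧ LeftAb Cn C ∧ RightAb Cn C ∧ Deduc Cn C ∧ CompactOp C := by
    intro h2
    have hXC : ∀ X : Set L, X ⊆ C X := by
      intro X
      rw [h2 X]
      exact Set.subset_union_left.trans (hIncl _)
    refine ⟨?_, ?_, ?_, ?_, ?_⟩
    · -- Supra
      intro X
      rw [h2 X]
      exact hMono _ _ Set.subset_union_left
    · -- LeftAb
      intro X
      rw [h2 X]
      exact hIdem _
    · -- RightAb
      intro X Y h
      have hDXY : D X = D Y := by
        apply Set.Subset.antisymm
        · exact hDanti Y X h.ge
        · exact hDanti X Y h.le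
      rw [h2 X, h2 Y, hDXY]
      apply Set.Subset.antisymm
      · apply hCn_le
        apply Set.union_subset
        · intro x hx
          exact hMono _ _ Set.subset_union_left (h ▸ hIncl X hx)
        · exact (Set.subset_union_right.trans (hIncl _))
      · apply hCn_le
        apply Set.union_subset
        · intro x hx
          exact hMono _ _ Set.subset_union_left (h ▸ hIncl Y hx)
        · exact (Set.subset_union_right.trans (hIncl _))
    · -- Deduc
      intro X Y hYX
      rw [h2 X]
      have hDCY : D X ⊆ C Y := fun x hx =>
        (hDmem X x).mp hx Y (hYX.trans (hIncl X))
      exact hMono _ _ (Set.union_subset_union_right X hDCY)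
    · -- Compact
      intro X x hx
      rw [h2 X] at hx
      obtain ⟨B, hBfin, hBsub, hxB⟩ := hCnCpt _ x hx
      refine ⟨B ∩ X, hBfin.inter_of_left X, Set.inter_subset_right, ?_⟩
      intro Y hAY hYX
      rw [h2 Y]
      have hBsub' : B ⊆ Y ∪ D Y := by
        intro b hb
        rcases hBsub hb with hbX | hbD
        · exact Or.inl (hAY ⟨hb, hbX⟩)
        · exact Or.inr (hDanti Y X (hMono Y X hYX) hbD)
      have : Cn B ⊆ Cn (Y ∪ D Y) := hMono _ _ hBsub'
      exact this hxB
  -- (3) → (2)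
  have h32 : Supra Cn C ∧ LeftAb Cn C ∧ RightAb Cn C ∧ Deduc Cn C ∧ CompactOp C →
      ∀ X : Set L, C X = Cn (X ∪ D X) := by
    rintro ⟨hSup, hLA, hRA, hDed, hCpt⟩ X
    apply Set.Subset.antisymm
    · -- hard direction: C X ⊆ Cn (X ∪ D X)
      intro x hx
      have hx' : x ∈ C (Cn X) := by
        rw [hRA (Cn X) X (hIdem X)]
        exact hx
      obtain ⟨A, hAfin, hAsub, hAall⟩ := hCpt (Cn X) x hx'
      obtain ⟨t, ht⟩ := hded A hAfin x
      have htD : t ∈ D X := by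
        rw [hDmem]
        intro Y hY
        have h1 : x ∈ C (Y ∪ A) :=
          hAall (Y ∪ A) Set.subset_union_right (Set.union_subset hY hAsub)
        have h2 : x ∈ Cn ((Y ∪ A) ∪ C Y) := hDed (Y ∪ A) Y Set.subset_union_left h1
        have h3 : (Y ∪ A) ∪ C Y ⊆ C Y ∪ A := by
          intro z hz
          rcases hz with (hz | hz) | hz
          · exact Or.inl ((hIncl Y).trans (hSup Y) hz)
          · exact Or.inr hz
          · exact Or.inl hz
        have h4 : x ∈ Cn (C Y ∪ A) := hMono _ _ h3 h2
        have h5 : t ∈ Cn (C Y) := (ht (C Y)).mp h4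
        rwa [hLA Y] at h5
      have hW : x ∈ Cn ((Cn X ∪ D X) ∪ A) :=
        (ht (Cn X ∪ D X)).mpr (hIncl _ (Or.inr htD))
      have hsub : (Cn X ∪ D X) ∪ A ⊆ Cn (X ∪ D X) := by
        intro z hz
        rcases hz with (hz | hz) | hz
        · exact hMono _ _ Set.subset_union_left hz
        · exact hIncl _ (Or.inr hz)
        · exact hMono _ _ Set.subset_union_left (hAsub hz)
      exact hCn_le hsub hW
    · -- easy direction
      have h1 : X ∪ D X ⊆ C X := by
        apply Set.union_subset
        · exact (hIncl X).trans (hSup X)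
        · intro x hx
          exact (hDmem X x).mp hx X (hIncl X)
      have := hMono _ _ h1
      rwa [hLA X] at this
  exact ⟨⟨h12, h21⟩, ⟨fun h2 => h23 h2, fun h3 => h32 h3⟩⟩


end DedNonmon
end

section
/- If S : Set L → Set L is antitonic and right-absorbing, and C is defined by C(X) = Cn(X ∪ S(X)) for all X ⊆ L, then for every X ⊆ L, S(X) ⊆ ⋂_{Y : Y ⊆ Cn(X)} C(Y). In other words, ⋂_{Y ⊆ Cn(X)} C(Y) is the largest right-absorbing antitonic representation of C. -/
open Set

namespace DedNonmon

variable {L : Type*}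

theorem stmt5 (Cn C S : Set L → Set L)
    (hIncl : ∀ X : Set L, X ⊆ Cn X)
    (hMono : ∀ X Y : Set L, X ⊆ Y → Cn X ⊆ Cn Y)
    (hIdem : ∀ X : Set L, Cn (Cn X) = Cn X)
    (hCnCpt : ∀ (X : Set L) (x : L), x ∈ Cn X → ∃ A : Set L, A.Finite ∧ A ⊆ X ∧ x ∈ Cn A)
    (hS : Antitonic S) (hSra : RightAb Cn S)
    (hC : ∀ X : Set L, C X = Cn (X ∪ S X)) :
    ∀ X : Set L, S X ⊆ ⋂ (Y : Set L) (_ : Y ⊆ Cn X), C Y := by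
  intro X x hx
  simp only [mem_iInter]
  intro Y hY
  rw [hC]
  have hcn : Cn (X ∪ Y) = Cn X := by
    apply Subset.antisymm
    · have : X ∪ Y ⊆ Cn X := union_subset (hIncl X) hY
      have := hMono _ _ this
      rwa [hIdem] at this
    · exact hMono _ _ (subset_union_left)
  have hSeq : S (X ∪ Y) = S X := hSra _ _ hcn
  have : x ∈ S Y := hS Y (X ∪ Y) subset_union_right (hSeq ▸ hx)
  exact hIncl _ (Or.inr this)


end DedNonmon
end

section
/- Every supraclassical, left-absorbing and cumulative operation C : Set L → Set L is right-absorbing, i.e., Cn(X) = Cn(Y) implies C(X) = C(Y); equivalently, C(Cn(X)) = C(X) for all X. -/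
open Set

namespace DedNonmon

variable {L : Type*}

theorem stmt6 (Cn C : Set L → Set L)
    (hIncl : ∀ X : Set L, X ⊆ Cn X)
    (hMono : ∀ X Y : Set L, X ⊆ Y → Cn X ⊆ Cn Y)
    (hIdem : ∀ X : Set L, Cn (Cn X) = Cn X)
    (hCnCpt : ∀ (X : Set L) (x : L), x ∈ Cn X → ∃ A : Set L, A.Finite ∧ A ⊆ X ∧ x ∈ Cn A)
    (hSup : Supra Cn C) (hLA : LeftAb Cn C) (hCum : Cumul Cn C) :
    RightAb Cn C ∧ ∀ X : Set L, C (Cn X) = C X := by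
  have key : ∀ X : Set L, C (Cn X) = C X := by
    intro X
    have h1 : Cn X ⊆ Cn (C X) := fun x hx => hIncl (C X) (hSup X hx)
    have h2 := hCum X (Cn X) h1
    have h3 : X ∪ Cn X = Cn X := union_eq_self_of_subset_left (hIncl X)
    rw [h3] at h2
    calc C (Cn X) = Cn (C (Cn X)) := (hLA _).symm
      _ = Cn (C X) := h2
      _ = C X := hLA _
  refine ⟨fun X Y h => ?_, key⟩
  rw [← key X, ← key Y, h]

end DedNonmon
end

section
/- If C : Set L → Set L is supraclassical, left-absorbing, deductive and cumulative, then for every X ⊆ L, ⋂_{Y : Y ⊆ Cn(X)} C(Y) = ⋂_{Y : Y ⊆ C(X)} C(Y). -/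
open Set

namespace DedNonmon

variable {L : Type*}

/-- Iterated deduction theorem over a finite set `B`. -/
lemma chain_lemma (Cn : Set L → Set L) (imp : L → L → L)
    (himp : ∀ (a b : L) (X : Set L), b ∈ Cn (X ∪ {a}) ↔ imp a b ∈ Cn X)
    (B : Set L) (hB : B.Finite) (y : L) :
    ∃ u : L, ∀ S : Set L, u ∈ Cn S ↔ y ∈ Cn (S ∪ B) := by
  refine Set.Finite.induction_on (motive := fun B _ => ∃ u : L, ∀ S : Set L, u ∈ Cn S ↔ y ∈ Cn (S ∪ B))
    B hB ⟨y, fun S => by rw [Set.union_empty]⟩ ?_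
  intro a B' ha hBfin ih
  obtain ⟨u, hu⟩ := ih
  refine ⟨imp a u, fun S => ?_⟩
  have e : S ∪ insert a B' = S ∪ {a} ∪ B' := by
    rw [Set.union_assoc, Set.singleton_union]
  rw [e, ← himp a u S, hu (S ∪ {a})]

theorem stmt7 (Cn C : Set L → Set L)
    (hIncl : ∀ X : Set L, X ⊆ Cn X)
    (hMono : ∀ X Y : Set L, X ⊆ Y → Cn X ⊆ Cn Y)
    (hIdem : ∀ X : Set L, Cn (Cn X) = Cn X)
    (hCnCpt : ∀ (X : Set L) (x : L), x ∈ Cn X → ∃ A : Set L, A.Finite ∧ A ⊆ X ∧ x ∈ Cn A)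
    (hImp : ∃ imp : L → L → L, ∀ (a b : L) (X : Set L), b ∈ Cn (X ∪ {a}) ↔ imp a b ∈ Cn X)
    (hSup : Supra Cn C) (hLA : LeftAb Cn C) (hDed : Deduc Cn C) (hCum : Cumul Cn C) :
    ∀ X : Set L,
      (⋂ (Y : Set L) (_ : Y ⊆ Cn X), C Y) = ⋂ (Y : Set L) (_ : Y ⊆ C X), C Y := by
  intro X
  obtain ⟨imp, himp⟩ := hImp
  -- basic facts
  have hXC : ∀ W : Set L, W ⊆ C W := fun W => (hIncl W).trans (hSup W)
  -- C (Cn X) = C X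
  have hCCn : C (Cn X) = C X := by
    have h1 : Cn X ⊆ Cn (C X) := hMono X (C X) (hXC X)
    have h2 := hCum X (Cn X) h1
    have h3 : X ∪ Cn X = Cn X := Set.union_eq_self_of_subset_left (hIncl X)
    rw [h3, hLA, hLA] at h2
    exact h2
  apply Set.Subset.antisymm
  · -- hard direction
    intro x hx
    simp only [Set.mem_iInter] at hx ⊢
    intro Y hY
    set Z : Set L := Cn X ∩ Cn Y with hZdef
    have hZX : Z ⊆ Cn X := Set.inter_subset_left
    have hxZ : x ∈ C Z := hx Z hZX
    -- deductivity: C X ⊆ Cn (Cn X ∪ C Z)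
    have hded : C X ⊆ Cn (Cn X ∪ C Z) := by
      have := hDed (Cn X) Z hZX
      rwa [hCCn] at this
    -- key claim : Y ⊆ Cn (C Z)
    have hkey : Y ⊆ Cn (C Z) := by
      intro y hy
      have hyCX : y ∈ C X := hY hy
      have hyCn : y ∈ Cn (Cn X ∪ C Z) := hded hyCX
      obtain ⟨A, hAfin, hAsub, hyA⟩ := hCnCpt _ y hyCn
      set B : Set L := A ∩ C Z with hBdef
      have hBfin : B.Finite := hAfin.subset Set.inter_subset_left
      have hBCZ : B ⊆ C Z := Set.inter_subset_right
      set A' : Set L := A \ C Z with hA'def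
      have hA'X : A' ⊆ Cn X := by
        intro a ha
        rcases hAsub ha.1 with h | h
        · exact h
        · exact absurd h ha.2
      obtain ⟨u, hu⟩ := chain_lemma Cn imp himp B hBfin y
      -- u ∈ Cn A'
      have huA' : u ∈ Cn A' := by
        rw [hu A']
        have hAcov : A ⊆ A' ∪ B := by
          intro a ha
          by_cases h : a ∈ C Z
          · exact Or.inr ⟨ha, h⟩
          · exact Or.inl ⟨ha, h⟩
        exact hMono A (A' ∪ B) hAcov hyA
      -- u ∈ Cn X
      have huX : u ∈ Cn X := by
        have : Cn A' ⊆ Cn (Cn X) := hMono A' (Cn X) hA'X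
        rw [hIdem] at this
        exact this huA'
      -- u ∈ Cn Y
      have huY : u ∈ Cn Y := by
        rw [hu Y]
        exact hMono Y (Y ∪ B) Set.subset_union_left (hIncl Y hy)
      have huZ : u ∈ Z := ⟨huX, huY⟩
      -- conclude y ∈ Cn (C Z)
      have huCZ : u ∈ Cn (C Z) := hIncl (C Z) ((hIncl Z).trans (hSup Z) huZ)
      have hy2 : y ∈ Cn (C Z ∪ B) := (hu (C Z)).mp huCZ
      have hsub : C Z ∪ B ⊆ C Z := Set.union_subset Set.Subset.rfl hBCZ
      exact hMono _ _ hsub hy2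
    -- cumulativity both ways
    have h5 : C (Z ∪ Y) = C Z := by
      have := hCum Z Y hkey
      rwa [hLA, hLA] at this
    have h6 : C (Y ∪ Z) = C Y := by
      have hZCY : Z ⊆ Cn (C Y) := by
        intro z hz
        exact hMono Y (C Y) (hXC Y) hz.2
      have := hCum Y Z hZCY
      rwa [hLA, hLA] at this
    rw [← h6, Set.union_comm, h5]
    exact hxZ
  · -- easy direction
    intro x hx
    simp only [Set.mem_iInter] at hx ⊢
    intro Y hY
    exact hx Y (hY.trans (hSup X))

end DedNonmon
end

section
/- Let C : Set L → Set L be an operation. The following are equivalent: (1) there exists an antitonic, right-absorbing and cumulative operator S : Set L → Set L such that C(X) = Cn(X ∪ S(X)) for every X ⊆ L; (2) for every X ⊆ L, C(X) = Cn(X ∪ ⋂_{Y : Y ⊆ C(X)} C(Y)); (3) C is supraclassical, left-absorbing, deductive, cumulative and compact. -/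
open Set

namespace DedNonmon

variable {L : Type*}

private def impL (imp : L → L → L) (l : List L) (b : L) : L := l.foldr imp b

private abbrev kop (C : Set L → Set L) (X : Set L) : Set L :=
  ⋂ (Y : Set L) (_ : Y ⊆ C X), C Y

private abbrev sop (Cn C : Set L → Set L) (X : Set L) : Set L :=
  ⋂ (W : Set L) (_ : W ⊆ Cn X), C W

private lemma mem_kop {C : Set L → Set L} {X : Set L} {s : L} :
    s ∈ kop C X ↔ ∀ Y : Set L, Y ⊆ C X → s ∈ C Y := by simp [kop]

private lemma mem_sop {Cn C : Set L → Set L} {X : Set L} {s : L} :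
    s ∈ sop Cn C X ↔ ∀ W : Set L, W ⊆ Cn X → s ∈ C W := by simp [sop]

private lemma cn_le {Cn : Set L → Set L}
    (hMono : ∀ X Y : Set L, X ⊆ Y → Cn X ⊆ Cn Y)
    (hIdem : ∀ X : Set L, Cn (Cn X) = Cn X)
    {X Y : Set L} (h : X ⊆ Cn Y) : Cn X ⊆ Cn Y := by
  have h2 := hMono X (Cn Y) h
  rwa [hIdem] at h2

private lemma cn_eq {Cn : Set L → Set L}
    (hMono : ∀ X Y : Set L, X ⊆ Y → Cn X ⊆ Cn Y)
    (hIdem : ∀ X : Set L, Cn (Cn X) = Cn X)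
    {X Y : Set L} (h1 : X ⊆ Y) (h2 : Y ⊆ Cn X) : Cn Y = Cn X :=
  subset_antisymm (cn_le hMono hIdem h2) (hMono _ _ h1)

private lemma impL_iff {Cn : Set L → Set L} {imp : L → L → L}
    (himp : ∀ (a b : L) (X : Set L), b ∈ Cn (X ∪ {a}) ↔ imp a b ∈ Cn X)
    (l : List L) (b : L) :
    ∀ X : Set L, impL imp l b ∈ Cn X ↔ b ∈ Cn (X ∪ {a : L | a ∈ l}) := by
  induction l with
  | nil =>
    intro X
    have h : {a : L | a ∈ ([] : List L)} = (∅ : Set L) := by ext a; simp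
    rw [h, union_empty]
    exact Iff.rfl
  | cons a t ih =>
    intro X
    have h0 : impL imp (a :: t) b = imp a (impL imp t b) := rfl
    have hset : (X ∪ {a}) ∪ {x : L | x ∈ t} = X ∪ {x : L | x ∈ a :: t} := by
      ext y; simp [List.mem_cons]; tauto
    rw [h0, ← himp a _ X, ih (X ∪ {a}), hset]

/-- Right absorption follows from supraclassicality, left absorption and cumulativity. -/
private lemma rab3 (Cn C : Set L → Set L)
    (hIncl : ∀ X : Set L, X ⊆ Cn X)
    (hsup : Supra Cn C) (hlab : LeftAb Cn C) (hcum : Cumul Cn C) :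
    RightAb Cn C := by
  have key : ∀ U V : Set L, Cn U = Cn V → C (U ∪ V) = C U := by
    intro U V huv
    have h1 : V ⊆ Cn (C U) := by
      intro v hv
      have h2 : v ∈ Cn U := by rw [huv]; exact hIncl V hv
      exact hIncl (C U) (hsup U h2)
    have h3 := hcum U V h1
    rwa [hlab (U ∪ V), hlab U] at h3
  intro X Y h
  have hXY := key X Y h
  have hYX := key Y X h.symm
  rw [union_comm Y X] at hYX
  rw [← hXY, hYX]

/-- cumulativity in the "absorbing" form. -/
private lemma cumul_abs (Cn C : Set L → Set L)
    (hlab : LeftAb Cn C) (hcum : Cumul Cn C)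
    {X Y : Set L} (h : Y ⊆ C X) : C (X ∪ Y) = C X := by
  have h1 : Y ⊆ Cn (C X) := by rw [hlab]; exact h
  have h2 := hcum X Y h1
  rwa [hlab (X ∪ Y), hlab X] at h2

/-- Key representation lemma: under (3) any `x ∈ C X` has a single formula `φ`
lying in `C W` for every `W ⊆ Cn X` such that `x ∈ Cn (X ∪ {φ})`. -/
private lemma rep3 (Cn C : Set L → Set L) (imp : L → L → L)
    (hIncl : ∀ X : Set L, X ⊆ Cn X)
    (hMono : ∀ X Y : Set L, X ⊆ Y → Cn X ⊆ Cn Y)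
    (hIdem : ∀ X : Set L, Cn (Cn X) = Cn X)
    (himp : ∀ (a b : L) (X : Set L), b ∈ Cn (X ∪ {a}) ↔ imp a b ∈ Cn X)
    (hsup : Supra Cn C) (hlab : LeftAb Cn C) (hded : Deduc Cn C)
    (hcum : Cumul Cn C) (hcpt : CompactOp C)
    {X : Set L} {x : L} (hx : x ∈ C X) :
    ∃ φ : L, (∀ W : Set L, W ⊆ Cn X → φ ∈ C W) ∧ x ∈ Cn (X ∪ {φ}) := by
  have hrab := rab3 Cn C hIncl hsup hlab hcum
  have hCXeq : C X = C (Cn X) := hrab X (Cn X) (hIdem X).symm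
  have hx' : x ∈ C (Cn X) := by rw [← hCXeq]; exact hx
  obtain ⟨A, hAfin, hAsub, hA⟩ := hcpt (Cn X) x hx'
  obtain ⟨l, hl⟩ : ∃ l : List L, {a : L | a ∈ l} = A :=
    ⟨hAfin.toFinset.toList, by ext a; simp⟩
  refine ⟨impL imp l x, ?_, ?_⟩
  · intro W hW
    have hWA : x ∈ C (W ∪ A) := hA (W ∪ A) subset_union_right (union_subset hW hAsub)
    have hWCW : W ⊆ C W := fun w hw => hsup W (hIncl W hw)
    have h2 : C (W ∪ A) ⊆ Cn ((W ∪ A) ∪ C W) := hded (W ∪ A) W subset_union_left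
    have h3 : Cn ((W ∪ A) ∪ C W) = Cn (C W ∪ A) := by
      apply cn_eq hMono hIdem
      · exact union_subset subset_union_right (subset_union_right.trans subset_union_left)
      · refine union_subset (union_subset ?_ ?_) ?_
        · exact fun w hw => hIncl _ (mem_union_left _ (hWCW hw))
        · exact fun a ha => hIncl _ (mem_union_right _ ha)
        · exact fun c hc => hIncl _ (mem_union_left _ hc)
    have h4 : x ∈ Cn (C W ∪ {a : L | a ∈ l}) := by
      rw [hl, ← h3]; exact h2 hWA
    have h5 : impL imp l x ∈ Cn (C W) := (impL_iff himp l x (C W)).mpr h4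
    rwa [hlab W] at h5
  · have h6 : impL imp l x ∈ Cn {impL imp l x} := hIncl _ (mem_singleton _)
    have h7 : x ∈ Cn ({impL imp l x} ∪ {a : L | a ∈ l}) := (impL_iff himp l x _).mp h6
    have h8 : ({impL imp l x} ∪ {a : L | a ∈ l} : Set L) ⊆ Cn (X ∪ {impL imp l x}) := by
      rw [hl]
      apply union_subset
      · exact fun z hz => hIncl _ (mem_union_right _ hz)
      · exact hAsub.trans (hMono _ _ subset_union_left)
    exact cn_le hMono hIdem h8 h7

/-- The wall-breaker: membership in `C W` for all `W ⊆ Cn X` upgrades to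
membership in `C Y` for all `Y ⊆ C X`. -/
private lemma wall (Cn C : Set L → Set L) (imp : L → L → L)
    (hIncl : ∀ X : Set L, X ⊆ Cn X)
    (hMono : ∀ X Y : Set L, X ⊆ Y → Cn X ⊆ Cn Y)
    (hIdem : ∀ X : Set L, Cn (Cn X) = Cn X)
    (himp : ∀ (a b : L) (X : Set L), b ∈ Cn (X ∪ {a}) ↔ imp a b ∈ Cn X)
    (hsup : Supra Cn C) (hlab : LeftAb Cn C) (hded : Deduc Cn C)
    (hcum : Cumul Cn C) (hcpt : CompactOp C)
    {X : Set L} {s : L} (hs : ∀ W : Set L, W ⊆ Cn X → s ∈ C W) :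
    ∀ Y : Set L, Y ⊆ C X → s ∈ C Y := by
  have hrab := rab3 Cn C hIncl hsup hlab hcum
  intro Y hY
  have hrep : ∀ w, w ∈ Y → ∃ φ : L, (∀ W : Set L, W ⊆ Cn X → φ ∈ C W) ∧ w ∈ Cn (X ∪ {φ}) :=
    fun w hw => rep3 Cn C imp hIncl hMono hIdem himp hsup hlab hded hcum hcpt (hY hw)
  choose f hf1 hf2 using hrep
  set W₀ : Set L := {ψ : L | ∃ w : L, ∃ hw : w ∈ Y, ψ = imp (f w hw) w} with hW₀def
  have hW₀Cn : W₀ ⊆ Cn X := by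
    rintro ψ ⟨w, hw, rfl⟩
    exact (himp (f w hw) w X).mp (hf2 w hw)
  have hsW₀ : s ∈ C W₀ := hs W₀ hW₀Cn
  have hYC : Y ⊆ C W₀ := by
    intro w hw
    have h1 : w ∈ Cn ({imp (f w hw) w} ∪ {f w hw}) :=
      (himp (f w hw) w {imp (f w hw) w}).mpr (hIncl _ (mem_singleton _))
    have h2 : ({imp (f w hw) w} ∪ {f w hw} : Set L) ⊆ Cn (C W₀) := by
      apply union_subset
      · intro z hz
        rw [mem_singleton_iff] at hz; subst hz
        exact hIncl _ (hsup W₀ (hIncl W₀ ⟨w, hw, rfl⟩))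
      · intro z hz
        rw [mem_singleton_iff] at hz; subst hz
        exact hIncl _ (hf1 w hw W₀ hW₀Cn)
    have h3 := cn_le hMono hIdem h2 h1
    rwa [hlab W₀] at h3
  have hcum1 : C (W₀ ∪ Y) = C W₀ := cumul_abs Cn C hlab hcum hYC
  have hW₀CnY : W₀ ⊆ Cn Y := by
    rintro ψ ⟨w, hw, rfl⟩
    have h1 : w ∈ Cn ({w} ∪ {f w hw}) := hIncl _ (mem_union_left _ (mem_singleton _))
    have h2 : imp (f w hw) w ∈ Cn {w} := (himp (f w hw) w {w}).mp h1
    exact hMono _ _ (singleton_subset_iff.mpr hw) h2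
  have hWY : Cn (W₀ ∪ Y) = Cn Y :=
    cn_eq hMono hIdem subset_union_right (union_subset hW₀CnY (hIncl Y))
  have h4 : C (W₀ ∪ Y) = C Y := hrab (W₀ ∪ Y) Y hWY
  rw [← h4, hcum1]
  exact hsW₀

/-- (3) implies (2). -/
private lemma hard32 (Cn C : Set L → Set L) (imp : L → L → L)
    (hIncl : ∀ X : Set L, X ⊆ Cn X)
    (hMono : ∀ X Y : Set L, X ⊆ Y → Cn X ⊆ Cn Y)
    (hIdem : ∀ X : Set L, Cn (Cn X) = Cn X)
    (himp : ∀ (a b : L) (X : Set L), b ∈ Cn (X ∪ {a}) ↔ imp a b ∈ Cn X)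
    (hsup : Supra Cn C) (hlab : LeftAb Cn C) (hded : Deduc Cn C)
    (hcum : Cumul Cn C) (hcpt : CompactOp C) :
    ∀ X : Set L, C X = Cn (X ∪ kop C X) := by
  intro X
  have hXC : X ⊆ C X := fun x hx => hsup X (hIncl X hx)
  have hKC : kop C X ⊆ C X := fun s hs => mem_kop.mp hs X hXC
  apply subset_antisymm
  · intro x hx
    obtain ⟨φ, hφ1, hφ2⟩ :=
      rep3 Cn C imp hIncl hMono hIdem himp hsup hlab hded hcum hcpt hx
    have hφK : φ ∈ kop C X :=
      mem_kop.mpr (wall Cn C imp hIncl hMono hIdem himp hsup hlab hded hcum hcpt hφ1)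
    have h1 : Cn (X ∪ {φ}) ⊆ Cn (X ∪ kop C X) :=
      hMono _ _ (union_subset_union_right X (singleton_subset_iff.mpr hφK))
    exact h1 hφ2
  · rw [← hlab X]
    apply cn_le hMono hIdem
    exact union_subset (hXC.trans (hIncl (C X))) (hKC.trans (hIncl (C X)))

/-- (2) implies (3). -/
private lemma part2to3 (Cn C : Set L → Set L)
    (hIncl : ∀ X : Set L, X ⊆ Cn X)
    (hMono : ∀ X Y : Set L, X ⊆ Y → Cn X ⊆ Cn Y)
    (hIdem : ∀ X : Set L, Cn (Cn X) = Cn X)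
    (hCnCpt : ∀ (X : Set L) (x : L), x ∈ Cn X → ∃ A : Set L, A.Finite ∧ A ⊆ X ∧ x ∈ Cn A)
    (h2 : ∀ X : Set L, C X = Cn (X ∪ kop C X)) :
    Supra Cn C ∧ LeftAb Cn C ∧ Deduc Cn C ∧ Cumul Cn C ∧ CompactOp C := by
  have hXC : ∀ X : Set L, X ⊆ C X := by
    intro X x hx
    rw [h2 X]
    exact hIncl _ (mem_union_left _ hx)
  have hK : ∀ X Y : Set L, Y ⊆ C X → kop C X ⊆ C Y :=
    fun X Y hY s hs => mem_kop.mp hs Y hY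
  have hsup : Supra Cn C := by
    intro X
    rw [h2 X]
    exact hMono _ _ subset_union_left
  have hlab : LeftAb Cn C := by
    intro X
    rw [h2 X]
    exact hIdem _
  have habs : ∀ X Y : Set L, Y ⊆ C X → C (X ∪ Y) = C X := by
    intro X Y hY
    apply subset_antisymm
    · rw [h2 (X ∪ Y), ← hlab X]
      apply cn_le hMono hIdem
      refine union_subset (union_subset ?_ ?_) ?_
      · exact (hXC X).trans (hIncl _)
      · exact hY.trans (hIncl _)
      · have : X ⊆ C (X ∪ Y) := subset_union_left.trans (hXC (X ∪ Y))
        exact (hK (X ∪ Y) X this).trans (hIncl _)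
    · rw [h2 X, ← hlab (X ∪ Y)]
      apply cn_le hMono hIdem
      refine union_subset ?_ ?_
      · exact (subset_union_left.trans (hXC (X ∪ Y))).trans (hIncl _)
      · exact (hK X (X ∪ Y) (union_subset (hXC X) hY)).trans (hIncl _)
  have hded : Deduc Cn C := by
    intro X Y hYX
    rw [h2 X]
    apply cn_le hMono hIdem
    refine union_subset ?_ ?_
    · exact subset_union_left.trans (hIncl _)
    · exact (hK X Y (hYX.trans (hXC X))).trans ((subset_union_right (s := X)).trans (hIncl _))
  have hcum : Cumul Cn C := by
    intro X Y hYcn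
    rw [hlab X] at hYcn
    rw [habs X Y hYcn]
  have hcpt : CompactOp C := by
    intro X x hx
    have hx2 : x ∈ Cn (X ∪ kop C X) := by rw [← h2 X]; exact hx
    obtain ⟨D, hDfin, hDsub, hxD⟩ := hCnCpt _ x hx2
    refine ⟨D ∩ X, hDfin.subset inter_subset_left, inter_subset_right, ?_⟩
    intro Y hAY hYX
    have hD : D ⊆ C Y := by
      intro d hd
      rcases hDsub hd with hdX | hdK
      · exact hXC Y (hAY ⟨hd, hdX⟩)
      · exact hK X Y (hYX.trans (hXC X)) hdK
    have h3 := cn_le hMono hIdem (hD.trans (hIncl (C Y)))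
    rw [hlab Y] at h3
    exact h3 hxD
  exact ⟨hsup, hlab, hded, hcum, hcpt⟩

/-- (1) implies (2). -/
private lemma part1to2 (Cn C : Set L → Set L)
    (hIncl : ∀ X : Set L, X ⊆ Cn X)
    (hMono : ∀ X Y : Set L, X ⊆ Y → Cn X ⊆ Cn Y)
    (hIdem : ∀ X : Set L, Cn (Cn X) = Cn X)
    (S : Set L → Set L) (hanti : Antitonic S) (hrab : RightAb Cn S)
    (hcums : Cumul Cn S) (hrep : ∀ X : Set L, C X = Cn (X ∪ S X)) :
    ∀ X : Set L, C X = Cn (X ∪ kop C X) := by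
  intro X
  have hXC : ∀ Z : Set L, Z ⊆ C Z := by
    intro Z z hz
    rw [hrep Z]
    exact hIncl _ (mem_union_left _ hz)
  have hlab : ∀ Z : Set L, Cn (C Z) = C Z := by
    intro Z
    rw [hrep Z]
    exact hIdem _
  have hSK : S X ⊆ kop C X := by
    intro s hsS
    rw [mem_kop]
    intro Y hY
    have h1 : Cn (S (X ∪ S X)) = Cn (S X) := hcums X (S X) (hIncl _)
    have h2 : S (X ∪ S X) = S (Cn (X ∪ S X)) := hrab _ _ (hIdem _).symm
    have h3 : S (Cn (X ∪ S X)) ⊆ S Y := by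
      apply hanti Y (Cn (X ∪ S X))
      rw [← hrep X]
      exact hY
    have h4 : s ∈ Cn (S X) := hIncl _ hsS
    rw [← h1, h2] at h4
    have h5 : s ∈ Cn (S Y) := hMono _ _ h3 h4
    have h6 : s ∈ Cn (Y ∪ S Y) := hMono _ _ subset_union_right h5
    rwa [← hrep Y] at h6
  apply subset_antisymm
  · rw [hrep X]
    exact hMono _ _ (union_subset_union_right X hSK)
  · rw [← hlab X]
    apply cn_le hMono hIdem
    refine union_subset ((hXC X).trans (hIncl _)) ?_
    exact fun s hs => hIncl _ (mem_kop.mp hs X (hXC X))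

/-- (2) implies (1). -/
private lemma part2to1 (Cn C : Set L → Set L) (imp : L → L → L)
    (hIncl : ∀ X : Set L, X ⊆ Cn X)
    (hMono : ∀ X Y : Set L, X ⊆ Y → Cn X ⊆ Cn Y)
    (hIdem : ∀ X : Set L, Cn (Cn X) = Cn X)
    (hCnCpt : ∀ (X : Set L) (x : L), x ∈ Cn X → ∃ A : Set L, A.Finite ∧ A ⊆ X ∧ x ∈ Cn A)
    (himp : ∀ (a b : L) (X : Set L), b ∈ Cn (X ∪ {a}) ↔ imp a b ∈ Cn X)
    (h2 : ∀ X : Set L, C X = Cn (X ∪ kop C X)) :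
    ∃ S : Set L → Set L, Antitonic S ∧ RightAb Cn S ∧ Cumul Cn S ∧
      ∀ X : Set L, C X = Cn (X ∪ S X) := by
  obtain ⟨hsup, hlab, hded, hcum, hcpt⟩ := part2to3 Cn C hIncl hMono hIdem hCnCpt h2
  have hwall : ∀ (X : Set L) (s : L), (∀ W : Set L, W ⊆ Cn X → s ∈ C W) →
      ∀ Y : Set L, Y ⊆ C X → s ∈ C Y :=
    fun X s hs => wall Cn C imp hIncl hMono hIdem himp hsup hlab hded hcum hcpt hs
  have hXC : ∀ X : Set L, X ⊆ C X := fun X x hx => hsup X (hIncl X hx)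
  have hsC : ∀ X : Set L, sop Cn C X ⊆ C X :=
    fun X s hs => mem_sop.mp hs X (hIncl X)
  have hclosed : ∀ X : Set L, Cn (sop Cn C X) = sop Cn C X := by
    intro X
    apply subset_antisymm ?_ (hIncl _)
    intro s hs
    rw [mem_sop]
    intro W hW
    have h1 : sop Cn C X ⊆ Cn (C W) := fun t ht => hIncl _ (mem_sop.mp ht W hW)
    have h3 := cn_le hMono hIdem h1 hs
    rwa [hlab W] at h3
  have hkeq : ∀ X : Set L, sop Cn C X = kop C X := by
    intro X
    apply subset_antisymm
    · intro s hs
      exact mem_kop.mpr (hwall X s (mem_sop.mp hs))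
    · intro s hs
      rw [mem_sop]
      intro W hW
      exact mem_kop.mp hs W (hW.trans (hsup X))
  refine ⟨sop Cn C, ?_, ?_, ?_, ?_⟩
  · -- Antitonic
    intro X Y hXY s hs
    rw [mem_sop] at hs ⊢
    intro W hW
    exact hs W (hW.trans (hMono X Y hXY))
  · -- RightAb
    intro X Y h
    ext s
    rw [mem_sop, mem_sop, h]
  · -- Cumul
    intro X Y hY
    rw [hclosed X] at hY
    apply subset_antisymm
    · -- Cn (sop (X ∪ Y)) ⊆ Cn (sop X)
      apply hMono
      intro s hs
      rw [mem_sop] at hs ⊢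
      intro W hW
      exact hs W (hW.trans (hMono X (X ∪ Y) subset_union_left))
    · -- Cn (sop X) ⊆ Cn (sop (X ∪ Y))
      apply hMono
      intro s hs
      rw [mem_sop]
      intro W hW
      have hXYCX : X ∪ Y ⊆ C X := union_subset (hXC X) (hY.trans (hsC X))
      have hWCX : W ⊆ C X := by
        refine hW.trans ?_
        rw [← hlab X]
        exact cn_le hMono hIdem (hXYCX.trans (hIncl (C X)))
      exact hwall X s (mem_sop.mp hs) W hWCX
  · -- representation
    intro X
    rw [h2 X, hkeq X]


theorem stmt8 (Cn C : Set L → Set L)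
    (hIncl : ∀ X : Set L, X ⊆ Cn X)
    (hMono : ∀ X Y : Set L, X ⊆ Y → Cn X ⊆ Cn Y)
    (hIdem : ∀ X : Set L, Cn (Cn X) = Cn X)
    (hCnCpt : ∀ (X : Set L) (x : L), x ∈ Cn X → ∃ A : Set L, A.Finite ∧ A ⊆ X ∧ x ∈ Cn A)
    (hImp : ∃ imp : L → L → L, ∀ (a b : L) (X : Set L), b ∈ Cn (X ∪ {a}) ↔ imp a b ∈ Cn X)
 :
    ((∃ S : Set L → Set L, Antitonic S ∧ RightAb Cn S ∧ Cumul Cn S ∧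
        ∀ X : Set L, C X = Cn (X ∪ S X)) ↔
      ∀ X : Set L, C X = Cn (X ∪ ⋂ (Y : Set L) (_ : Y ⊆ C X), C Y)) ∧
    ((∀ X : Set L, C X = Cn (X ∪ ⋂ (Y : Set L) (_ : Y ⊆ C X), C Y)) ↔
      (Supra Cn C ∧ LeftAb Cn C ∧ Deduc Cn C ∧ Cumul Cn C ∧ CompactOp C)) := by
  obtain ⟨imp, himp⟩ := hImp
  constructor
  · constructor
    · rintro ⟨S, hanti, hrab, hcums, hrep⟩
      exact part1to2 Cn C hIncl hMono hIdem S hanti hrab hcums hrep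
    · intro h2
      exact part2to1 Cn C imp hIncl hMono hIdem hCnCpt himp h2
  · constructor
    · intro h2
      exact part2to3 Cn C hIncl hMono hIdem hCnCpt h2
    · rintro ⟨hsup, hlab, hded, hcum, hcpt⟩
      exact hard32 Cn C imp hIncl hMono hIdem himp hsup hlab hded hcum hcpt

end DedNonmon
end

section
/- If S : Set L → Set L is antitonic, right-absorbing and cumulative, and C is defined by C(X) = Cn(X ∪ S(X)) for all X ⊆ L, then C is cumulative: whenever Y ⊆ Cn(C(X)) one has Cn(C(X ∪ Y)) = Cn(C(X)). -/
open Set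

namespace DedNonmon

variable {L : Type*}

theorem stmt9 (Cn C S : Set L → Set L)
    (hIncl : ∀ X : Set L, X ⊆ Cn X)
    (hMono : ∀ X Y : Set L, X ⊆ Y → Cn X ⊆ Cn Y)
    (hIdem : ∀ X : Set L, Cn (Cn X) = Cn X)
    (hCnCpt : ∀ (X : Set L) (x : L), x ∈ Cn X → ∃ A : Set L, A.Finite ∧ A ⊆ X ∧ x ∈ Cn A)
    (hImp : ∃ imp : L → L → L, ∀ (a b : L) (X : Set L), b ∈ Cn (X ∪ {a}) ↔ imp a b ∈ Cn X)
    (hS : Antitonic S) (hSra : RightAb Cn S) (hScum : Cumul Cn S)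
    (hC : ∀ X : Set L, C X = Cn (X ∪ S X)) :
    Cumul Cn C := by
  obtain ⟨imp, himp⟩ := hImp
  have hCn : ∀ {U V : Set L}, U ⊆ Cn V → Cn U ⊆ Cn V := by
    intro U V h
    have := hMono U (Cn V) h
    rwa [hIdem] at this
  -- chaining lemma: discharge a finite set A of premises into an implication chain
  have chain : ∀ (A : Set L), A.Finite → ∀ B (y : L), y ∈ Cn (B ∪ A) →
      ∃ z, z ∈ Cn B ∧ y ∈ Cn (A ∪ {z}) ∧ ∀ W, y ∈ Cn W → z ∈ Cn W := by
    intro A hA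
    refine Set.Finite.induction_on (motive := fun A _ => ∀ B (y : L), y ∈ Cn (B ∪ A) →
        ∃ z, z ∈ Cn B ∧ y ∈ Cn (A ∪ {z}) ∧ ∀ W, y ∈ Cn W → z ∈ Cn W) A hA ?_ ?_
    · intro B y hy
      refine ⟨y, by simpa using hy, hIncl _ (by simp), fun W h => h⟩
    · intro a A' ha hA' ih B y hy
      have hre : B ∪ insert a A' = (B ∪ {a}) ∪ A' := by ext x; simp; tauto
      rw [hre] at hy
      obtain ⟨z', hz'B, hz'y, hz'W⟩ := ih (B ∪ {a}) y hy
      refine ⟨imp a z', (himp a z' B).mp hz'B, ?_, ?_⟩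
      · -- y ∈ Cn (insert a A' ∪ {imp a z'})
        set W := insert a A' ∪ {imp a z'} with hW
        have hzW : imp a z' ∈ Cn W := hIncl _ (Or.inr rfl)
        have hz'W2 : z' ∈ Cn W := by
          have : z' ∈ Cn (W ∪ {a}) := (himp a z' W).mpr hzW
          have hWa : W ∪ {a} = W := by
            apply Set.union_eq_self_of_subset_right
            intro x hx; rcases hx with rfl; exact Or.inl (Set.mem_insert _ _)
          rwa [hWa] at this
        have hsub : A' ∪ {z'} ⊆ Cn W := by
          rintro x (hx | rfl)
          · exact hIncl _ (Or.inl (Set.mem_insert_of_mem a hx))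
          · exact hz'W2
        exact hCn hsub hz'y
      · intro W hyW
        have h1 : z' ∈ Cn W := hz'W W hyW
        have h2 : z' ∈ Cn (W ∪ {a}) := hMono _ _ Set.subset_union_left h1
        exact (himp a z' W).mp h2
  intro X Y hY
  have hYX : Y ⊆ Cn (X ∪ S X) := by
    rw [hC X, hIdem] at hY; exact hY
  -- choose witnesses
  have hsel : ∀ y ∈ Y, ∃ z, z ∈ Cn (S X) ∧ y ∈ Cn (X ∪ {z}) ∧
      ∀ W, y ∈ Cn W → z ∈ Cn W := by
    intro y hy
    obtain ⟨D, hDfin, hDsub, hyD⟩ := hCnCpt _ _ (hYX hy)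
    have hD : D ⊆ (D \ X) ∪ (D ∩ X) := by
      intro x hx
      by_cases hxX : x ∈ X
      · exact Or.inr ⟨hx, hxX⟩
      · exact Or.inl ⟨hx, hxX⟩
    have hyD' : y ∈ Cn ((D \ X) ∪ (D ∩ X)) := hMono _ _ hD hyD
    obtain ⟨z, hzB, hzy, hzW⟩ := chain (D ∩ X) (hDfin.subset Set.inter_subset_left)
      (D \ X) y hyD'
    refine ⟨z, ?_, ?_, hzW⟩
    · refine hMono _ _ ?_ hzB
      intro x ⟨hxD, hxX⟩
      rcases hDsub hxD with h | h
      · exact absurd h hxX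
      · exact h
    · refine hMono _ _ ?_ hzy
      rintro x (hx | rfl)
      · exact Or.inl hx.2
      · exact Or.inr rfl
  choose! f hf1 hf2 hf3 using hsel
  set T : Set L := f '' Y with hT
  have hT1 : T ⊆ Cn (S X) := by rintro _ ⟨y, hy, rfl⟩; exact hf1 y hy
  have hEq : Cn (X ∪ Y) = Cn (X ∪ T) := by
    apply subset_antisymm
    · apply hCn
      rintro x (hx | hx)
      · exact hIncl _ (Or.inl hx)
      · refine hMono _ _ ?_ (hf2 x hx)
        rintro w (hw | rfl)
        · exact Or.inl hw
        · exact Or.inr ⟨x, hx, rfl⟩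
    · apply hCn
      rintro x (hx | ⟨y, hy, rfl⟩)
      · exact hIncl _ (Or.inl hx)
      · exact hf3 y hy (X ∪ Y) (hIncl _ (Or.inr hy))
  have hSeq : S (X ∪ Y) = S (X ∪ T) := hSra _ _ hEq
  have hScum' : Cn (S (X ∪ T)) = Cn (S X) := hScum X T hT1
  have hSfin : Cn (S (X ∪ Y)) = Cn (S X) := by rw [hSeq, hScum']
  rw [hC, hC, hIdem, hIdem]
  apply subset_antisymm
  · apply hCn
    rintro x ((hx | hx) | hx)
    · exact hIncl _ (Or.inl hx)
    · exact hYX hx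
    · have : x ∈ S X := hS X (X ∪ Y) Set.subset_union_left hx
      exact hIncl _ (Or.inr this)
  · apply hCn
    rintro x (hx | hx)
    · exact hIncl _ (Or.inl (Or.inl hx))
    · have h1 : x ∈ Cn (S X) := hIncl _ hx
      rw [← hSfin] at h1
      exact hMono _ _ (fun w hw => Or.inr hw) h1

end DedNonmon
end

section
/- Let C : Set L → Set L be supraclassical, left-absorbing, deductive and cumulative. Then C is supracompact if and only if C is compact. -/
open Set

namespace DedNonmon

variable {L : Type*}

/-- Iterated implication ("chain") lemma: folding `imp` over a list internalizes
finitely many premises into an implication chain. -/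
theorem chain_iff' (Cn : Set L → Set L) (imp : L → L → L)
    (himp : ∀ (a b : L) (X : Set L), b ∈ Cn (X ∪ {a}) ↔ imp a b ∈ Cn X) :
    ∀ (l : List L) (Z : Set L) (b : L),
      l.foldr imp b ∈ Cn Z ↔ b ∈ Cn (Z ∪ {x | x ∈ l}) := by
  intro l
  induction l with
  | nil =>
      intro Z b
      have h : (Z ∪ {x | x ∈ ([] : List L)}) = Z := by ext z; simp
      rw [h, List.foldr_nil]
  | cons a t ih =>
      intro Z b
      have hset : (Z ∪ {a}) ∪ {x | x ∈ t} = Z ∪ {x | x ∈ a :: t} := by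
        ext z; simp [List.mem_cons]; tauto
      rw [List.foldr_cons, ← himp a (t.foldr imp b) Z, ih (Z ∪ {a}) b, hset]

theorem stmt10 (Cn C : Set L → Set L)
    (hIncl : ∀ X : Set L, X ⊆ Cn X)
    (hMono : ∀ X Y : Set L, X ⊆ Y → Cn X ⊆ Cn Y)
    (hIdem : ∀ X : Set L, Cn (Cn X) = Cn X)
    (hCnCpt : ∀ (X : Set L) (x : L), x ∈ Cn X → ∃ A : Set L, A.Finite ∧ A ⊆ X ∧ x ∈ Cn A)
    (hImp : ∃ imp : L → L → L, ∀ (a b : L) (X : Set L), b ∈ Cn (X ∪ {a}) ↔ imp a b ∈ Cn X)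
    (hSup : Supra Cn C) (hLA : LeftAb Cn C) (hDed : Deduc Cn C) (hCum : Cumul Cn C) :
    SupracompactOp C ↔ CompactOp C := by
  -- basic facts
  have hsubC : ∀ S : Set L, S ⊆ C S := fun S => (hIncl S).trans (hSup S)
  have hcum : ∀ S W : Set L, W ⊆ C S → C (S ∪ W) = C S := by
    intro S W hW
    have h := hCum S W (by rw [hLA]; exact hW)
    rwa [hLA, hLA] at h
  constructor
  · -- Supracompact → Compact (easy)
    intro hS X x hx
    obtain ⟨A, hAfin, hAX, hA⟩ := hS X x hx
    exact ⟨A, hAfin, hAX, fun Y hAY hYX => hA Y hAY (hYX.trans (hsubC X))⟩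
  · -- Compact → Supracompact (hard)
    intro hC X x hx
    obtain ⟨imp, himp⟩ := hImp
    have hchain := chain_iff' Cn imp himp
    -- C (Cn X) = C X
    have hCCnX : C (Cn X) = C X := by
      have h := hcum X (Cn X) (hSup X)
      rwa [Set.union_eq_self_of_subset_left (hIncl X)] at h
    -- compactness core at Cn X
    obtain ⟨A₁, hA₁fin, hA₁sub, hA₁⟩ := hC (Cn X) x (by rw [hCCnX]; exact hx)
    -- pull A₁ into X
    have hchoice : ∀ a : L, a ∈ A₁ → ∃ F : Set L, F.Finite ∧ F ⊆ X ∧ a ∈ Cn F :=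
      fun a ha => hCnCpt X a (hA₁sub ha)
    choose! F hFfin hFsub hFmem using hchoice
    refine ⟨⋃ a ∈ A₁, F a, hA₁fin.biUnion (fun a ha => hFfin a ha),
      Set.iUnion₂_subset (fun a ha => hFsub a ha), ?_⟩
    intro Y hAY hYCX
    -- A₁ ⊆ Cn Y
    have hA₁CnY : A₁ ⊆ Cn Y := by
      intro a ha
      have h1 : a ∈ Cn (F a) := hFmem a ha
      have h2 : F a ⊆ Y := (Set.subset_biUnion_of_mem ha).trans hAY
      exact hMono _ _ h2 h1
    -- the interpolant
    set T : Set L := Cn Y ∩ Cn X with hTdef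
    have hTCnX : T ⊆ Cn X := Set.inter_subset_right
    have hTCnY : T ⊆ Cn Y := Set.inter_subset_left
    have hA₁T : A₁ ⊆ T := fun a ha => ⟨hA₁CnY ha, hA₁sub ha⟩
    have hxT : x ∈ C T := hA₁ T hA₁T hTCnX
    -- Y ⊆ C T
    have hYCT : Y ⊆ C T := by
      intro y hy
      -- y ∈ Cn (Cn X ∪ C T)
      have hCX : C X ⊆ Cn (Cn X ∪ C T) := by
        have h := hDed (Cn X) T hTCnX
        rwa [hCCnX] at h
      have hy1 : y ∈ Cn (Cn X ∪ C T) := hCX (hYCX hy)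
      obtain ⟨H, hHfin, hHsub, hyH⟩ := hCnCpt _ y hy1
      classical
      set E : Set L := H \ Cn X with hEdef
      set G : Set L := H ∩ Cn X with hGdef
      have hEfin : E.Finite := hHfin.subset Set.diff_subset
      have hECT : E ⊆ C T := by
        intro e he
        rcases hHsub he.1 with h | h
        · exact absurd h he.2
        · exact h
      obtain ⟨l, hl⟩ : ∃ l : List L, ∀ z, z ∈ l ↔ z ∈ E :=
        ⟨hEfin.toFinset.toList, fun z => by
          rw [Finset.mem_toList, Set.Finite.mem_toFinset]⟩
      have hlE : {z | z ∈ l} = E := by ext z; exact hl z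
      have hHGE : H ⊆ G ∪ E := by
        intro h hh
        by_cases hc : h ∈ Cn X
        · exact Or.inl ⟨hh, hc⟩
        · exact Or.inr ⟨hh, hc⟩
      -- the chain χ := l.foldr imp y lies in Cn X
      have hχCnX : l.foldr imp y ∈ Cn X := by
        have h1 : y ∈ Cn (G ∪ E) := hMono _ _ hHGE hyH
        have h2 : l.foldr imp y ∈ Cn G := by
          rw [hchain l G y, hlE]; exact h1
        have h3 : Cn G ⊆ Cn X := by
          have := hMono G (Cn X) Set.inter_subset_right
          rwa [hIdem] at this
        exact h3 h2
      -- and in Cn Y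
      have hχCnY : l.foldr imp y ∈ Cn Y := by
        rw [hchain l Y y, hlE]
        exact hIncl _ (Or.inl hy)
      -- hence y ∈ Cn (T ∪ E) ⊆ C T
      have hyTE : y ∈ Cn (T ∪ E) := by
        have h1 : l.foldr imp y ∈ Cn T := hIncl T ⟨hχCnY, hχCnX⟩
        rw [hchain l T y, hlE] at h1
        exact h1
      have hTECT : Cn (T ∪ E) ⊆ C T := by
        have h1 : T ∪ E ⊆ C T := Set.union_subset ((hIncl T).trans (hSup T)) hECT
        have h2 := hMono _ _ h1
        rw [hLA] at h2
        exact h2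
      exact hTECT hyTE
    -- conclude via cumulativity
    have h1 : C (T ∪ Y) = C T := hcum T Y hYCT
    have h2 : C (Y ∪ T) = C Y := hcum Y T (hTCnY.trans (hSup Y))
    rw [Set.union_comm] at h1
    rw [← h2, h1]
    exact hxT


end DedNonmon
end

section
/- Let F be a finitary operation that is supraclassical, left-absorbing and deductive. Then for every finite A ⊆ L, F(A) = Cn(A ∪ ⋂_{B ⊆ A} F(B)), where the intersection is over all subsets B of the finite set A. -/
open Set

namespace DedNonmon

variable {L : Type*}

theorem stmt11 (Cn F : Set L → Set L)
    (hIncl : ∀ X : Set L, X ⊆ Cn X)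
    (hMono : ∀ X Y : Set L, X ⊆ Y → Cn X ⊆ Cn Y)
    (hIdem : ∀ X : Set L, Cn (Cn X) = Cn X)
    (hCnCpt : ∀ (X : Set L) (x : L), x ∈ Cn X → ∃ A : Set L, A.Finite ∧ A ⊆ X ∧ x ∈ Cn A)
    (hImp : ∃ imp : L → L → L, ∀ (a b : L) (X : Set L), b ∈ Cn (X ∪ {a}) ↔ imp a b ∈ Cn X)
    (hSup : FinSupra Cn F) (hLA : FinLeftAb Cn F) (hDed : FinDeduc Cn F) :
    ∀ A : Set L, A.Finite → F A = Cn (A ∪ ⋂ (B : Set L) (_ : B ⊆ A), F B) := by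
  obtain ⟨imp, himp⟩ := hImp
  -- deduction theorem for finite sets
  have ded : ∀ A : Set L, A.Finite → ∀ x : L,
      ∃ φ : L, ∀ Y : Set L, φ ∈ Cn Y ↔ x ∈ Cn (Y ∪ A) := by
    intro A hA
    refine Set.Finite.induction_on (motive := fun A _ => ∀ x : L, ∃ φ : L, ∀ Y : Set L, φ ∈ Cn Y ↔ x ∈ Cn (Y ∪ A)) A hA ?_ ?_
    · intro x; exact ⟨x, fun Y => by rw [Set.union_empty]⟩
    · intro a s _ _ ih x
      obtain ⟨φ, hφ⟩ := ih x
      refine ⟨imp a φ, fun Y => ?_⟩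
      rw [← himp a φ Y, hφ (Y ∪ {a})]
      constructor <;> intro h
      · refine hMono _ _ ?_ h
        rw [Set.union_assoc, Set.singleton_union]
      · refine hMono _ _ ?_ h
        rw [Set.union_assoc, Set.singleton_union]
  intro A hA
  apply Set.Subset.antisymm
  · intro x hx
    obtain ⟨φ, hφ⟩ := ded A hA x
    have hφmem : φ ∈ ⋂ (B : Set L) (_ : B ⊆ A), F B := by
      refine Set.mem_iInter₂.2 fun B hB => ?_
      have hBf : B.Finite := hA.subset hB
      have hxB : x ∈ Cn (F B ∪ A) := by
        have := hDed A B hA hBf hB hx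
        rwa [Set.union_comm] at this
      have := (hφ (F B)).2 hxB
      rwa [hLA B hBf] at this
    have : x ∈ Cn ((⋂ (B : Set L) (_ : B ⊆ A), F B) ∪ A) :=
      (hφ _).1 (hIncl _ hφmem)
    rwa [Set.union_comm] at this
  · have h1 : A ∪ (⋂ (B : Set L) (_ : B ⊆ A), F B) ⊆ F A := by
      apply Set.union_subset
      · exact fun a ha => hSup A hA (hIncl A ha)
      · exact fun x hx => Set.mem_iInter₂.1 hx A (Set.Subset.refl A)
    calc Cn (A ∪ ⋂ (B : Set L) (_ : B ⊆ A), F B) ⊆ Cn (F A) := hMono _ _ h1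
      _ = F A := hLA A hA

end DedNonmon
end

section
/- Let S : Set L → Set L be antitonic and strongly co-compact, with S(∅) finite, and let C be defined by C(X) = Cn(X ∪ S(X)) for all X ⊆ L. Then C is strongly co-compact: whenever x ∉ C(X) there is a finite A ⊆ X with x ∉ C(A). -/
open Set

namespace DedNonmon

variable {L : Type*}

theorem stmt13 (Cn C S : Set L → Set L)
    (hIncl : ∀ X : Set L, X ⊆ Cn X)
    (hMono : ∀ X Y : Set L, X ⊆ Y → Cn X ⊆ Cn Y)
    (hIdem : ∀ X : Set L, Cn (Cn X) = Cn X)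
    (hCnCpt : ∀ (X : Set L) (x : L), x ∈ Cn X → ∃ A : Set L, A.Finite ∧ A ⊆ X ∧ x ∈ Cn A)
    (hImp : ∃ imp : L → L → L, ∀ (a b : L) (X : Set L), b ∈ Cn (X ∪ {a}) ↔ imp a b ∈ Cn X)
    (hS : Antitonic S) (hScc : StrongCoCompact S) (hSfin : (S ∅).Finite)
    (hC : ∀ X : Set L, C X = Cn (X ∪ S X)) :
    StrongCoCompact C := by
  intro X x hx
  -- D = elements of S ∅ not in S X
  have hD : ((S ∅) \ (S X)).Finite := hSfin.subset (diff_subset)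
  -- for each y in D, pick a finite B y ⊆ X with y ∉ S (B y)
  have hpick : ∀ y ∈ (S ∅) \ (S X), ∃ B : Set L, B.Finite ∧ B ⊆ X ∧ y ∉ S B := by
    intro y hy
    exact hScc X y hy.2
  choose! B hBfin hBsub hBnot using hpick
  refine ⟨⋃ y ∈ (S ∅) \ (S X), B y, hD.biUnion (fun y hy => hBfin y hy), ?_, ?_⟩
  · exact iUnion₂_subset (fun y hy => hBsub y hy)
  · set A : Set L := ⋃ y ∈ (S ∅) \ (S X), B y with hA
    have hAX : A ⊆ X := iUnion₂_subset (fun y hy => hBsub y hy)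
    have hSA : S A ⊆ S X := by
      intro z hz
      by_contra hzX
      have hzD : z ∈ (S ∅) \ (S X) := ⟨hS ∅ A (empty_subset A) hz, hzX⟩
      have hBA : B z ⊆ A := subset_biUnion_of_mem hzD
      exact hBnot z hzD (hS (B z) A hBA hz)
    rw [hC] at hx ⊢
    intro hxA
    exact hx (hMono _ _ (union_subset_union hAX hSA) hxA)

end DedNonmon
end

section
/- Let F be a finitary operation that is supraclassical, left-absorbing and deductive. Then there exists exactly one operation C : Set L → Set L that extends F and is supraclassical, left-absorbing, deductive, compact and strongly co-compact; it is given by C(X) = Cn(X ∪ ⋂_{B finite, B ⊆ X} F(B)). -/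
open Set

namespace DedNonmon

variable {L : Type*}

theorem stmt14 (Cn F : Set L → Set L)
    (hIncl : ∀ X : Set L, X ⊆ Cn X)
    (hMono : ∀ X Y : Set L, X ⊆ Y → Cn X ⊆ Cn Y)
    (hIdem : ∀ X : Set L, Cn (Cn X) = Cn X)
    (hCnCpt : ∀ (X : Set L) (x : L), x ∈ Cn X → ∃ A : Set L, A.Finite ∧ A ⊆ X ∧ x ∈ Cn A)
    (hImp : ∃ imp : L → L → L, ∀ (a b : L) (X : Set L), b ∈ Cn (X ∪ {a}) ↔ imp a b ∈ Cn X)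
    (hSup : FinSupra Cn F) (hLA : FinLeftAb Cn F) (hDed : FinDeduc Cn F) :
    (∃! C : Set L → Set L,
      (∀ A : Set L, A.Finite → C A = F A) ∧
        Supra Cn C ∧ LeftAb Cn C ∧ Deduc Cn C ∧ CompactOp C ∧ StrongCoCompact C) ∧
    (∀ C : Set L → Set L,
      ((∀ A : Set L, A.Finite → C A = F A) ∧
        Supra Cn C ∧ LeftAb Cn C ∧ Deduc Cn C ∧ CompactOp C ∧ StrongCoCompact C) →
      ∀ X : Set L, C X = Cn (X ∪ ⋂ (B : Set L) (_ : B.Finite) (_ : B ⊆ X), F B)) := by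
  classical
  obtain ⟨imp, himp⟩ := hImp
  let K : Set L → Set L := fun X => ⋂ (B : Set L) (_ : B.Finite) (_ : B ⊆ X), F B
  let C0 : Set L → Set L := fun X => Cn (X ∪ K X)
  have memK : ∀ (X : Set L) (x : L),
      x ∈ K X ↔ ∀ B : Set L, B.Finite → B ⊆ X → x ∈ F B := by
    intro X x; simp [K, Set.mem_iInter]
  have cnle : ∀ X Y : Set L, X ⊆ Cn Y → Cn X ⊆ Cn Y := by
    intro X Y h
    have := hMono X (Cn Y) h
    rwa [hIdem] at this
  have fold_iff : ∀ (l : List L) (Z : Set L) (x : L),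
      x ∈ Cn (Z ∪ {b | b ∈ l}) ↔ l.foldr imp x ∈ Cn Z := by
    intro l
    induction l with
    | nil => intro Z x; simp
    | cons a l ih =>
      intro Z x
      have hset : {b | b ∈ a :: l} = ({a} : Set L) ∪ {b | b ∈ l} := by
        ext b; simp [List.mem_cons]
      rw [hset, ← Set.union_assoc]
      simp only [List.foldr_cons]
      rw [← himp]
      exact ih (Z ∪ {a}) x
  have subFB : ∀ B : Set L, B.Finite → B ⊆ F B := fun B hB =>
    (hIncl B).trans (hSup B hB)
  have key : ∀ (A X : Set L) (x : L), A.Finite → A ⊆ X →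
      (∀ B : Set L, B.Finite → A ⊆ B → B ⊆ X → x ∈ F B) → x ∈ C0 X := by
    intro A X x hAfin hAX h
    let l := hAfin.toFinset.toList
    have hlA : {b | b ∈ l} = A := by
      ext b; simp [l, Set.Finite.mem_toFinset]
    have hfold : l.foldr imp x ∈ K X := by
      rw [memK]
      intro B hBfin hBX
      have hx : x ∈ F (A ∪ B) :=
        h (A ∪ B) (hAfin.union hBfin) subset_union_left (union_subset hAX hBX)
      have h2 : x ∈ Cn ((A ∪ B) ∪ F B) :=
        hDed (A ∪ B) B (hAfin.union hBfin) hBfin subset_union_right hx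
      have h3 : x ∈ Cn (F B ∪ A) := by
        refine cnle _ _ ?_ h2
        intro y hy
        rcases hy with hy | hy
        · rcases hy with hy | hy
          · exact hIncl _ (Or.inr hy)
          · exact hIncl _ (Or.inl (subFB B hBfin hy))
        · exact hIncl _ (Or.inl hy)
      rw [← hLA B hBfin]
      rw [← hlA] at h3
      exact (fold_iff l (F B) x).mp h3
    have h4 : l.foldr imp x ∈ Cn (X ∪ K X) := hIncl _ (Or.inr hfold)
    have h5 : x ∈ Cn ((X ∪ K X) ∪ {b | b ∈ l}) := (fold_iff l _ x).mpr h4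
    refine cnle _ _ ?_ h5
    rw [hlA]
    apply union_subset (hIncl _)
    intro y hy
    exact hIncl _ (Or.inl (hAX hy))
  have ext0 : ∀ A : Set L, A.Finite → C0 A = F A := by
    intro A hA
    apply Set.Subset.antisymm
    · show Cn (A ∪ K A) ⊆ F A
      rw [← hLA A hA]
      apply cnle
      apply union_subset
      · intro y hy; exact hIncl _ (hSup A hA (hIncl A hy))
      · intro y hy
        exact hIncl _ ((memK A y).mp hy A hA (subset_refl A))
    · intro x hx
      refine key A A x hA (subset_refl A) ?_
      intro B hBf hAB hBA
      have hBA' : B = A := Set.Subset.antisymm hBA hAB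
      rw [hBA']; exact hx
  have hSupra0 : Supra Cn C0 := fun X => hMono X _ subset_union_left
  have hLA0 : LeftAb Cn C0 := fun X => hIdem _
  have hKanti : ∀ X Y : Set L, Y ⊆ X → K X ⊆ K Y := by
    intro X Y hYX x hx
    rw [memK] at hx ⊢
    exact fun B hBf hBY => hx B hBf (hBY.trans hYX)
  have hDed0 : Deduc Cn C0 := by
    intro X Y hYX
    show Cn (X ∪ K X) ⊆ Cn (X ∪ C0 Y)
    apply hMono
    apply union_subset subset_union_left
    intro y hy
    exact Or.inr (hIncl _ (Or.inr (hKanti X Y hYX hy)))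
  have hCpt0 : CompactOp C0 := by
    intro X x hx
    obtain ⟨D, hDfin, hDsub, hxD⟩ := hCnCpt _ x hx
    refine ⟨D ∩ X, hDfin.inter_of_left X, inter_subset_right, ?_⟩
    intro Y hAY hYX
    show x ∈ Cn (Y ∪ K Y)
    refine hMono D _ ?_ hxD
    intro d hd
    rcases hDsub hd with h | h
    · exact Or.inl (hAY ⟨hd, h⟩)
    · exact Or.inr (hKanti X Y hYX h)
  have hSCC0 : StrongCoCompact C0 := by
    intro X x hx
    by_contra hcon
    push_neg at hcon
    apply hx
    show x ∈ Cn (X ∪ K X)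
    refine hIncl _ (Or.inr ?_)
    rw [memK]
    intro B hBf hBX
    have hb := hcon B hBf hBX
    rwa [ext0 B hBf] at hb
  have huniq : ∀ C : Set L → Set L,
      ((∀ A : Set L, A.Finite → C A = F A) ∧ Supra Cn C ∧ LeftAb Cn C ∧ Deduc Cn C ∧
        CompactOp C ∧ StrongCoCompact C) → ∀ X, C X = C0 X := by
    rintro C ⟨hExt, hS, hL, hD, hCpt, hSCC⟩ X
    apply Set.Subset.antisymm
    · intro x hx
      obtain ⟨A, hAfin, hAX, hA⟩ := hCpt X x hx
      refine key A X x hAfin hAX ?_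
      intro B hBf hAB hBX
      have hb := hA B hAB hBX
      rwa [hExt B hBf] at hb
    · show Cn (X ∪ K X) ⊆ C X
      rw [← hL X]
      apply hMono
      apply union_subset ((hIncl X).trans (hS X))
      intro y hy
      by_contra hyc
      obtain ⟨B, hBf, hBX, hyB⟩ := hSCC X y hyc
      apply hyB
      rw [hExt B hBf]
      exact (memK X y).mp hy B hBf hBX
  have hP0 : (∀ A : Set L, A.Finite → C0 A = F A) ∧ Supra Cn C0 ∧ LeftAb Cn C0 ∧
      Deduc Cn C0 ∧ CompactOp C0 ∧ StrongCoCompact C0 :=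
    ⟨ext0, hSupra0, hLA0, hDed0, hCpt0, hSCC0⟩
  constructor
  · exact ⟨C0, hP0, fun C hC => funext fun X => huniq C hC X⟩
  · intro C hC X
    rw [huniq C hC X]


end DedNonmon
end

section
/- Let F be a finitary operation that is supraclassical, left-absorbing and deductive, and let C be its unique supraclassical, left-absorbing, deductive, compact and strongly co-compact extension. Then for all X ⊆ L and x ∈ L: x ∈ C(X) if and only if there is a finite A ⊆ X such that x ∈ F(A ∪ B) for every finite B ⊆ X. -/
open Set

namespace DedNonmon

variable {L : Type*}

theorem stmt15 (Cn F C : Set L → Set L)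
    (hIncl : ∀ X : Set L, X ⊆ Cn X)
    (hMono : ∀ X Y : Set L, X ⊆ Y → Cn X ⊆ Cn Y)
    (hIdem : ∀ X : Set L, Cn (Cn X) = Cn X)
    (hCnCpt : ∀ (X : Set L) (x : L), x ∈ Cn X → ∃ A : Set L, A.Finite ∧ A ⊆ X ∧ x ∈ Cn A)
    (hImp : ∃ imp : L → L → L, ∀ (a b : L) (X : Set L), b ∈ Cn (X ∪ {a}) ↔ imp a b ∈ Cn X)
    (hSup : FinSupra Cn F) (hLA : FinLeftAb Cn F) (hDed : FinDeduc Cn F)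
    (hExt : ∀ A : Set L, A.Finite → C A = F A)
    (hCsup : Supra Cn C) (hCla : LeftAb Cn C) (hCded : Deduc Cn C)
    (hCcpt : CompactOp C) (hCscc : StrongCoCompact C) :
    ∀ (X : Set L) (x : L),
      x ∈ C X ↔ ∃ A : Set L, A.Finite ∧ A ⊆ X ∧
        ∀ B : Set L, B.Finite → B ⊆ X → x ∈ F (A ∪ B) := by

  obtain ⟨imp, himp⟩ := hImp
  have key : ∀ A : Set L, A.Finite → ∀ x : L, ∃ y : L,
      ∀ Z : Set L, x ∈ Cn (Z ∪ A) ↔ y ∈ Cn Z := by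
    intro A hA
    refine Set.Finite.induction_on (motive := fun A _ => ∀ x : L, ∃ y : L,
      ∀ Z : Set L, x ∈ Cn (Z ∪ A) ↔ y ∈ Cn Z) A hA ?_ ?_
    · intro x; exact ⟨x, fun Z => by rw [Set.union_empty]⟩
    · intro a s _ _ ih x
      obtain ⟨y', hy'⟩ := ih x
      refine ⟨imp a y', fun Z => ?_⟩
      have h : Z ∪ insert a s = (Z ∪ {a}) ∪ s := by
        rw [Set.union_assoc, Set.singleton_union]
      rw [h, hy' (Z ∪ {a}), himp]
  intro X x
  constructor
  · intro hx
    obtain ⟨A, hAfin, hAX, hA⟩ := hCcpt X x hx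
    refine ⟨A, hAfin, hAX, fun B hBfin hBX => ?_⟩
    have h1 : x ∈ C (A ∪ B) := hA (A ∪ B) Set.subset_union_left (Set.union_subset hAX hBX)
    rwa [hExt (A ∪ B) (hAfin.union hBfin)] at h1
  · rintro ⟨A, hAfin, hAX, hA⟩
    by_contra hx
    obtain ⟨y, hy⟩ := key A hAfin x
    -- y ∉ C X
    have hyCX : y ∉ C X := by
      intro hyC
      apply hx
      have hXC : X ⊆ C X := fun z hz => hCsup X (hIncl X hz)
      have h1 : x ∈ Cn (C X ∪ A) := (hy (C X)).mpr (hIncl (C X) hyC)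
      have h2 : C X ∪ A ⊆ C X := Set.union_subset (le_refl _) (fun z hz => hXC (hAX hz))
      have h3 : x ∈ Cn (C X) := hMono _ _ h2 h1
      rwa [hCla X] at h3
    obtain ⟨A₁, hA₁fin, hA₁X, hyA₁⟩ := hCscc X y hyCX
    rw [hExt A₁ hA₁fin] at hyA₁
    have hxF : x ∈ F (A ∪ A₁) := hA A₁ hA₁fin hA₁X
    have h4 : x ∈ Cn ((A ∪ A₁) ∪ F A₁) :=
      hDed (A ∪ A₁) A₁ (hAfin.union hA₁fin) hA₁fin Set.subset_union_right hxF
    have h5 : (A ∪ A₁) ∪ F A₁ ⊆ Cn (F A₁ ∪ A) := by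
      intro z hz
      rcases hz with hz | hz
      · rcases hz with hz | hz
        · exact hIncl _ (Or.inr hz)
        · exact hIncl _ (Or.inl (hSup A₁ hA₁fin (hIncl A₁ hz)))
      · exact hIncl _ (Or.inl hz)
    have h6 : x ∈ Cn (F A₁ ∪ A) := by
      have := hMono _ _ h5 h4
      rwa [hIdem] at this
    have h7 : y ∈ Cn (F A₁) := (hy (F A₁)).mp h6
    rw [hLA A₁ hA₁fin] at h7
    exact hyA₁ h7

end DedNonmon
end

section
/- Let F be a finitary operation that is supraclassical, left-absorbing, right-absorbing and deductive. Then there exists exactly one operation C : Set L → Set L that extends F and is supraclassical, left-absorbing, right-absorbing, deductive, compact and co-compact. -/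
open Set

namespace DedNonmon

variable {L : Type*}

theorem stmt17 (Cn F : Set L → Set L)
    (hIncl : ∀ X : Set L, X ⊆ Cn X)
    (hMono : ∀ X Y : Set L, X ⊆ Y → Cn X ⊆ Cn Y)
    (hIdem : ∀ X : Set L, Cn (Cn X) = Cn X)
    (hCnCpt : ∀ (X : Set L) (x : L), x ∈ Cn X → ∃ A : Set L, A.Finite ∧ A ⊆ X ∧ x ∈ Cn A)
    (hImp : ∃ imp : L → L → L, ∀ (a b : L) (X : Set L), b ∈ Cn (X ∪ {a}) ↔ imp a b ∈ Cn X)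
    (hSup : FinSupra Cn F) (hLA : FinLeftAb Cn F) (hRA : FinRightAb Cn F)
    (hDed : FinDeduc Cn F) :
    ∃! C : Set L → Set L,
      (∀ A : Set L, A.Finite → C A = F A) ∧
      Supra Cn C ∧ LeftAb Cn C ∧ RightAb Cn C ∧ Deduc Cn C ∧ CompactOp C ∧ CoCompact Cn C := by
  classical
  obtain ⟨imp, himp⟩ := hImp
  have mono' : ∀ X Y : Set L, X ⊆ Cn Y → Cn X ⊆ Cn Y := by
    intro X Y h
    have := hMono X (Cn Y) h
    rwa [hIdem] at this
  have hFB_eq : ∀ A B : Set L, A.Finite → B.Finite → A ⊆ B → B ⊆ Cn A → F B = F A := by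
    intro A B hAf hBf hAB hBC
    exact hRA B A hBf hAf (Set.Subset.antisymm (mono' B A hBC) (hMono A B hAB))
  have step : ∀ D A : Set L, D.Finite → A.Finite → F (D ∪ A) ⊆ Cn (F D ∪ A) := by
    intro D A hDf hAf y hy
    have hD : D ⊆ F D := (hIncl D).trans (hSup D hDf)
    have h1 : F (D ∪ A) ⊆ Cn ((D ∪ A) ∪ F D) :=
      hDed (D ∪ A) D (hDf.union hAf) hDf Set.subset_union_left
    have hsub : (D ∪ A) ∪ F D ⊆ F D ∪ A := by
      rintro z ((hz | hz) | hz)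
      · exact Or.inl (hD hz)
      · exact Or.inr hz
      · exact Or.inl hz
    exact hMono _ _ hsub (h1 hy)
  have finCn : ∀ (A X : Set L), A.Finite → A ⊆ Cn X →
      ∃ A₀ : Set L, A₀.Finite ∧ A₀ ⊆ X ∧ A ⊆ Cn A₀ := by
    intro A X hAf hsub
    have key : ∀ a : L, ∃ B : Set L, B.Finite ∧ B ⊆ X ∧ (a ∈ A → a ∈ Cn B) := by
      intro a
      by_cases ha : a ∈ A
      · obtain ⟨B, h1, h2, h3⟩ := hCnCpt X a (hsub ha)
        exact ⟨B, h1, h2, fun _ => h3⟩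
      · exact ⟨∅, Set.finite_empty, Set.empty_subset _, fun h => absurd h ha⟩
    choose w h1 h2 h3 using key
    refine ⟨⋃ a ∈ A, w a, hAf.biUnion (fun a _ => h1 a),
      Set.iUnion₂_subset (fun a _ => h2 a), ?_⟩
    intro a ha
    exact hMono (w a) _ (Set.subset_biUnion_of_mem ha) (h3 a ha)
  have listOf : ∀ A : Set L, A.Finite → ∃ ls : List L, {a | a ∈ ls} = A := by
    intro A hA
    refine ⟨hA.toFinset.toList, ?_⟩
    ext a
    simp [Set.Finite.mem_toFinset]
  have chain : ∀ (ls : List L) (x : L) (Z : Set L),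
      x ∈ Cn (Z ∪ {a | a ∈ ls}) ↔ List.foldr imp x ls ∈ Cn Z := by
    intro ls
    induction ls with
    | nil =>
        intro x Z
        simp only [List.not_mem_nil, Set.setOf_false, Set.union_empty, List.foldr_nil]
    | cons a l ih =>
        intro x Z
        have hset : Z ∪ {b | b ∈ a :: l} = (Z ∪ {a}) ∪ {b | b ∈ l} := by
          ext y
          simp only [Set.mem_union, Set.mem_setOf_eq, List.mem_cons, Set.mem_singleton_iff]
          tauto
        rw [hset, List.foldr_cons, ← himp]
        exact ih x (Z ∪ {a})
  let C : Set L → Set L := fun X =>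
    {x | ∃ A : Set L, A.Finite ∧ A ⊆ Cn X ∧
      ∀ B : Set L, B.Finite → A ⊆ B → B ⊆ Cn X → x ∈ F B}
  have memC : ∀ (X : Set L) (x : L), x ∈ C X ↔ ∃ A : Set L, A.Finite ∧ A ⊆ Cn X ∧
      ∀ B : Set L, B.Finite → A ⊆ B → B ⊆ Cn X → x ∈ F B := fun _ _ => Iff.rfl
  have hCfin : ∀ A : Set L, A.Finite → C A = F A := by
    intro A hAf
    ext x
    constructor
    · intro hx
      obtain ⟨A', hA'f, hA'Cn, hA'⟩ := (memC A x).1 hx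
      have hx1 : x ∈ F (A' ∪ A) := hA' (A' ∪ A) (hA'f.union hAf) Set.subset_union_left
        (Set.union_subset hA'Cn (hIncl A))
      have heq : F (A' ∪ A) = F A := hFB_eq A (A' ∪ A) hAf (hA'f.union hAf)
        Set.subset_union_right (Set.union_subset hA'Cn (hIncl A))
      exact heq ▸ hx1
    · intro hx
      exact (memC A x).2 ⟨A, hAf, hIncl A, fun B hBf hAB hBCn =>
        (hFB_eq A B hAf hBf hAB hBCn).symm ▸ hx⟩
  have hSupC : Supra Cn C := by
    intro X x hx
    exact (memC X x).2 ⟨{x}, Set.finite_singleton x, Set.singleton_subset_iff.2 hx,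
      fun B hBf hxB _ => hSup B hBf (hIncl B (hxB rfl))⟩
  have hLAC : LeftAb Cn C := by
    intro X
    refine Set.Subset.antisymm ?_ (hIncl (C X))
    intro x hx
    obtain ⟨D, hDf, hDC, hxD⟩ := hCnCpt (C X) x hx
    have key : ∀ d : L, ∃ Ad : Set L, Ad.Finite ∧ Ad ⊆ Cn X ∧
        (d ∈ D → ∀ B : Set L, B.Finite → Ad ⊆ B → B ⊆ Cn X → d ∈ F B) := by
      intro d
      by_cases hd : d ∈ D
      · obtain ⟨Ad, h1, h2, h3⟩ := (memC X d).1 (hDC hd)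
        exact ⟨Ad, h1, h2, fun _ => h3⟩
      · exact ⟨∅, Set.finite_empty, Set.empty_subset _, fun h => absurd h hd⟩
    choose w hwf hwCn hw using key
    refine (memC X x).2 ⟨⋃ d ∈ D, w d, hDf.biUnion (fun d _ => hwf d),
      Set.iUnion₂_subset (fun d _ => hwCn d), ?_⟩
    intro B hBf hAB hBCn
    have hDFB : D ⊆ F B := fun d hd =>
      hw d hd B hBf ((Set.subset_biUnion_of_mem hd).trans hAB) hBCn
    have : x ∈ Cn (F B) := hMono _ _ hDFB hxD
    rwa [hLA B hBf] at this
  have hRAC : RightAb Cn C := by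
    intro X Y h
    ext x
    rw [memC X x, memC Y x, h]
  have hDedC : Deduc Cn C := by
    intro X Y hYX x hx
    obtain ⟨A, hAf, hACn, hA⟩ := (memC X x).1 hx
    obtain ⟨A₀, hA₀f, hA₀X, hAA₀⟩ := finCn A X hAf hACn
    obtain ⟨ls, hls⟩ := listOf A₀ hA₀f
    have hiCY : List.foldr imp x ls ∈ C Y := by
      refine (memC Y _).2 ⟨∅, Set.finite_empty, Set.empty_subset _, ?_⟩
      intro B hBf _ hBCnY
      have hBCnX : B ⊆ Cn X := hBCnY.trans (hMono Y X hYX)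
      have hx1 : x ∈ F ((B ∪ A₀) ∪ A) := by
        refine hA ((B ∪ A₀) ∪ A) ((hBf.union hA₀f).union hAf) Set.subset_union_right ?_
        refine Set.union_subset (Set.union_subset hBCnX ?_) hACn
        exact (hA₀X.trans (hIncl X))
      have heq : F ((B ∪ A₀) ∪ A) = F (B ∪ A₀) := by
        refine hFB_eq (B ∪ A₀) ((B ∪ A₀) ∪ A) (hBf.union hA₀f) ((hBf.union hA₀f).union hAf)
          Set.subset_union_left (Set.union_subset (hIncl _) ?_)
        exact hAA₀.trans (hMono A₀ (B ∪ A₀) Set.subset_union_right)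
      have hx2 : x ∈ Cn (F B ∪ A₀) := step B A₀ hBf hA₀f (heq ▸ hx1)
      have hx3 : List.foldr imp x ls ∈ Cn (F B) := (chain ls x (F B)).1 (by rw [hls]; exact hx2)
      rwa [hLA B hBf] at hx3
    have h1 : List.foldr imp x ls ∈ Cn (X ∪ C Y) := hIncl _ (Or.inr hiCY)
    have h2 : x ∈ Cn ((X ∪ C Y) ∪ A₀) := by
      have := (chain ls x (X ∪ C Y)).2 h1
      rwa [hls] at this
    exact hMono _ _ (Set.union_subset Set.Subset.rfl (hA₀X.trans Set.subset_union_left)) h2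
  have hCptC : CompactOp C := by
    intro X x hx
    obtain ⟨A, hAf, hACn, hA⟩ := (memC X x).1 hx
    obtain ⟨A₀, hA₀f, hA₀X, hAA₀⟩ := finCn A X hAf hACn
    refine ⟨A₀, hA₀f, hA₀X, ?_⟩
    intro Y hA₀Y hYX
    refine (memC Y x).2 ⟨A, hAf, hAA₀.trans (hMono A₀ Y hA₀Y), ?_⟩
    intro B hBf hAB hBCnY
    exact hA B hBf hAB (hBCnY.trans (hMono Y X hYX))
  have hCoC : CoCompact Cn C := by
    intro X x hx
    by_contra h
    push_neg at h
    apply hx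
    refine (memC X x).2 ⟨∅, Set.finite_empty, Set.empty_subset _, ?_⟩
    intro B hBf _ hBCn
    have := h B hBf hBCn
    rwa [hCfin B hBf] at this
  refine ⟨C, ⟨hCfin, hSupC, hLAC, hRAC, hDedC, hCptC, hCoC⟩, ?_⟩
  rintro C' ⟨hext', hSup', hLA', hRA', hDed', hCpt', hCoCpt'⟩
  funext X
  ext x
  constructor
  · intro hx
    have hx2 : x ∈ C' (Cn X) := by
      rw [← hRA' X (Cn X) (hIdem X).symm]
      exact hx
    obtain ⟨A, hAf, hAX, hA⟩ := hCpt' (Cn X) x hx2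
    refine (memC X x).2 ⟨A, hAf, hAX, ?_⟩
    intro B hBf hAB hBCn
    have := hA B hAB hBCn
    rwa [hext' B hBf] at this
  · intro hx
    obtain ⟨A, hAf, hACn, hA⟩ := (memC X x).1 hx
    obtain ⟨ls, hls⟩ := listOf A hAf
    have hiF : ∀ D : Set L, D.Finite → D ⊆ Cn X → List.foldr imp x ls ∈ F D := by
      intro D hDf hDCn
      have hx1 : x ∈ F (D ∪ A) := hA (D ∪ A) (hDf.union hAf) Set.subset_union_right
        (Set.union_subset hDCn hACn)
      have hx2 : x ∈ Cn (F D ∪ A) := step D A hDf hAf hx1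
      have hx3 : List.foldr imp x ls ∈ Cn (F D) := (chain ls x (F D)).1 (by rw [hls]; exact hx2)
      rwa [hLA D hDf] at hx3
    have hiC' : List.foldr imp x ls ∈ C' X := by
      by_contra h
      obtain ⟨D, hDf, hDCn, hD⟩ := hCoCpt' X _ h
      exact hD (by rw [hext' D hDf]; exact hiF D hDf hDCn)
    have h1 : x ∈ Cn (C' X ∪ A) := by
      have := (chain ls x (C' X)).2 (by rw [hLA' X]; exact hiC')
      rwa [hls] at this
    have h2 : C' X ∪ A ⊆ C' X := Set.union_subset Set.Subset.rfl (hACn.trans (hSup' X))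
    have h3 := hMono _ _ h2 h1
    rwa [hLA' X] at h3

end DedNonmon
end

section
/- Let F be a finitary operation that is supraclassical, left-absorbing, right-absorbing and deductive, and let C be its unique supraclassical, left-absorbing, right-absorbing, deductive, compact and co-compact extension. Then for all X ⊆ L and x ∈ L: x ∈ C(X) if and only if there is a finite A ⊆ X such that x ∈ F(A ∪ B) for every finite B ⊆ Cn(X). -/
open Set

namespace DedNonmon

variable {L : Type*}

theorem stmt18 (Cn F C : Set L → Set L)
    (hIncl : ∀ X : Set L, X ⊆ Cn X)
    (hMono : ∀ X Y : Set L, X ⊆ Y → Cn X ⊆ Cn Y)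
    (hIdem : ∀ X : Set L, Cn (Cn X) = Cn X)
    (hCnCpt : ∀ (X : Set L) (x : L), x ∈ Cn X → ∃ A : Set L, A.Finite ∧ A ⊆ X ∧ x ∈ Cn A)
    (hImp : ∃ imp : L → L → L, ∀ (a b : L) (X : Set L), b ∈ Cn (X ∪ {a}) ↔ imp a b ∈ Cn X)
    (hSup : FinSupra Cn F) (hLA : FinLeftAb Cn F) (hRA : FinRightAb Cn F)
    (hDed : FinDeduc Cn F)
    (hExt : ∀ A : Set L, A.Finite → C A = F A)
    (hCsup : Supra Cn C) (hCla : LeftAb Cn C) (hCra : RightAb Cn C) (hCded : Deduc Cn C)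
    (hCcpt : CompactOp C) (hCcc : CoCompact Cn C) :
    ∀ (X : Set L) (x : L),
      x ∈ C X ↔ ∃ A : Set L, A.Finite ∧ A ⊆ X ∧
        ∀ B : Set L, B.Finite → B ⊆ Cn X → x ∈ F (A ∪ B) := by
  obtain ⟨imp, himp⟩ := hImp
  -- iterated implication lemma
  have key : ∀ (l : List L) (Z : Set L) (z : L),
      z ∈ Cn (Z ∪ {a | a ∈ l}) ↔ l.foldr imp z ∈ Cn Z := by
    intro l
    induction l with
    | nil => intro Z z; simp
    | cons a l ih =>
      intro Z z
      have hset : Z ∪ {b | b ∈ a :: l} = (Z ∪ {a}) ∪ {b | b ∈ l} := by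
        ext b; simp [List.mem_cons]; tauto
      rw [hset]
      exact (ih _ z).trans (himp a _ Z)
  intro X x
  constructor
  · intro hx
    have hCXeq : C X = C (Cn X) := hCra X (Cn X) (hIdem X).symm
    rw [hCXeq] at hx
    obtain ⟨A, hAfin, hACn, hA⟩ := hCcpt (Cn X) x hx
    have hc : ∀ a : L, ∃ S : Set L, a ∈ A → S.Finite ∧ S ⊆ X ∧ a ∈ Cn S := by
      intro a
      by_cases ha : a ∈ A
      · obtain ⟨S, hS1, hS2, hS3⟩ := hCnCpt X a (hACn ha)
        exact ⟨S, fun _ => ⟨hS1, hS2, hS3⟩⟩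
      · exact ⟨∅, fun h => absurd h ha⟩
    choose S hS using hc
    set A' : Set L := ⋃ a ∈ A, S a with hA'def
    have hA'fin : A'.Finite := hAfin.biUnion (fun a ha => (hS a ha).1)
    have hA'X : A' ⊆ X := Set.iUnion₂_subset (fun a ha => (hS a ha).2.1)
    have hACnA' : A ⊆ Cn A' := by
      intro a ha
      exact hMono _ _ (Set.subset_biUnion_of_mem ha) ((hS a ha).2.2)
    refine ⟨A', hA'fin, hA'X, ?_⟩
    intro B hBfin hBCn
    set Y : Set L := (A ∪ A') ∪ B with hYdef
    have hYfin : Y.Finite := (hAfin.union hA'fin).union hBfin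
    have hxY : x ∈ C Y := by
      refine hA Y (Set.subset_union_left.trans Set.subset_union_left) ?_
      exact Set.union_subset (Set.union_subset hACn (hA'X.trans (hIncl X))) hBCn
    have hCnY : Cn Y = Cn (A' ∪ B) := by
      apply Set.Subset.antisymm
      · have h1 : Y ⊆ Cn (A' ∪ B) := by
          refine Set.union_subset (Set.union_subset ?_ ?_) ?_
          · exact hACnA'.trans (hMono _ _ Set.subset_union_left)
          · exact (Set.subset_union_left.trans (hIncl _))
          · exact (Set.subset_union_right.trans (hIncl _))
        have := hMono _ _ h1
        rwa [hIdem] at this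
      · exact hMono _ _ (Set.union_subset
          ((Set.subset_union_right (s := A)).trans Set.subset_union_left)
          Set.subset_union_right)
    have : F Y = F (A' ∪ B) := hRA Y (A' ∪ B) hYfin (hA'fin.union hBfin) hCnY
    rw [hExt Y hYfin, this] at hxY
    exact hxY
  · rintro ⟨A, hAfin, hAX, hF⟩
    set l : List L := hAfin.toFinset.toList with hldef
    have hlA : {a | a ∈ l} = A := by
      ext a; simp [hldef]
    set y : L := l.foldr imp x with hydef
    have hy : ∀ B : Set L, B.Finite → B ⊆ Cn X → y ∈ F B := by
      intro B hBfin hBCn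
      have hx1 : x ∈ F (A ∪ B) := hF B hBfin hBCn
      have hded := hDed (A ∪ B) B (hAfin.union hBfin) hBfin Set.subset_union_right
      have hBF : B ⊆ F B := (hIncl B).trans (hSup B hBfin)
      have hsub : (A ∪ B) ∪ F B ⊆ Cn (F B ∪ A) := by
        refine Set.union_subset (Set.union_subset ?_ ?_) ?_
        · exact Set.subset_union_right.trans (hIncl _)
        · exact (hBF.trans Set.subset_union_left).trans (hIncl _)
        · exact Set.subset_union_left.trans (hIncl _)
      have hx2 : x ∈ Cn (F B ∪ A) := by
        have h1 := hded hx1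
        have h2 := hMono _ _ hsub h1
        rwa [hIdem] at h2
      have hyCn : y ∈ Cn (F B) := (key l (F B) x).mp (by rwa [hlA])
      rwa [hLA B hBfin] at hyCn
    by_contra hxC
    have hXC : X ⊆ C X := (hIncl X).trans (hCsup X)
    have hyC : y ∉ C X := by
      intro hy'
      have h1 : x ∈ Cn (C X ∪ A) := by
        rw [← hlA]
        exact (key l (C X) x).mpr (hIncl (C X) hy')
      have h2 : Cn (C X ∪ A) ⊆ C X := by
        have h3 : C X ∪ A ⊆ C X := Set.union_subset Set.Subset.rfl (hAX.trans hXC)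
        have h4 := hMono _ _ h3
        rwa [hCla X] at h4
      exact hxC (h2 h1)
    obtain ⟨B, hBfin, hBCn, hyB⟩ := hCcc X y hyC
    exact hyB (by rw [hExt B hBfin]; exact hy B hBfin hBCn)


end DedNonmon
end

section
/- Let F be a finitary operation that is supraclassical, left-absorbing, right-absorbing, deductive and cumulative, and let C be its unique supraclassical, left-absorbing, right-absorbing, deductive, compact and co-compact extension, given by C(X) = Cn(X ∪ ⋂_{B finite, B ⊆ Cn(X)} F(B)). Then C is cumulative: whenever Y ⊆ Cn(C(X)) one has Cn(C(X ∪ Y)) = Cn(C(X)). -/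
open Set

namespace DedNonmon

variable {L : Type*}

/-- Fold a list of antecedents into an iterated implication. -/
def foldImp (imp : L → L → L) : List L → L → L
  | [], e => e
  | a :: l, e => imp a (foldImp imp l e)

/-- If `e` follows from `S` together with the members of `l`, then the folded
implication follows from `S` alone. -/
lemma foldImp_intro (imp : L → L → L) (Cn : Set L → Set L)
    (himp : ∀ (a b : L) (X : Set L), b ∈ Cn (X ∪ {a}) ↔ imp a b ∈ Cn X) :
    ∀ (l : List L) (S : Set L) (e : L),
      e ∈ Cn (S ∪ {x | x ∈ l}) → foldImp imp l e ∈ Cn S := by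
  intro l
  induction l with
  | nil =>
    intro S e h
    have hs : (S ∪ {x : L | x ∈ ([] : List L)}) = S := by ext x; simp
    rw [hs] at h
    simpa [foldImp] using h
  | cons a l ih =>
    intro S e h
    have hset : (S ∪ {x : L | x ∈ a :: l}) = ((S ∪ {a}) ∪ {x | x ∈ l}) := by
      ext x; simp [List.mem_cons]; tauto
    rw [hset] at h
    have := ih (S ∪ {a}) e h
    rw [himp] at this
    simpa [foldImp] using this

/-- `e` follows from the members of `l` together with the folded implication. -/
lemma foldImp_elim (imp : L → L → L) (Cn : Set L → Set L)
    (hIncl : ∀ X : Set L, X ⊆ Cn X)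
    (hMono : ∀ X Y : Set L, X ⊆ Y → Cn X ⊆ Cn Y)
    (hIdem : ∀ X : Set L, Cn (Cn X) = Cn X)
    (himp : ∀ (a b : L) (X : Set L), b ∈ Cn (X ∪ {a}) ↔ imp a b ∈ Cn X) :
    ∀ (l : List L) (e : L), e ∈ Cn ({x | x ∈ l} ∪ {foldImp imp l e}) := by
  have cnle : ∀ {S T : Set L}, S ⊆ Cn T → Cn S ⊆ Cn T := by
    intro S T h x hx
    have := hMono _ _ h hx
    rwa [hIdem] at this
  intro l
  induction l with
  | nil =>
    intro e
    have hs : ({x : L | x ∈ ([] : List L)} ∪ {foldImp imp [] e}) = {e} := by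
      ext x; simp [foldImp]
    rw [hs]
    exact hIncl _ rfl
  | cons a l ih =>
    intro e
    set S : Set L := {x | x ∈ a :: l} ∪ {foldImp imp (a :: l) e} with hS
    have hchain : foldImp imp (a :: l) e ∈ Cn S := by
      apply hIncl
      simp [hS]
    have ha : (S ∪ {a}) = S := by
      apply union_eq_self_of_subset_right
      intro x hx
      simp at hx
      subst hx
      simp [hS, List.mem_cons]
    have hfl : foldImp imp l e ∈ Cn S := by
      have h1 : imp a (foldImp imp l e) ∈ Cn S := by simpa [foldImp] using hchain
      have h2 := (himp a (foldImp imp l e) S).mpr h1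
      rwa [ha] at h2
    apply cnle (T := S) ?_ (ih e)
    intro x hx
    rcases hx with hx | hx
    · exact hIncl _ (Or.inl (by simp only [List.mem_cons, mem_setOf_eq] at hx ⊢; exact Or.inr hx))
    · simp at hx; subst hx; exact hfl


theorem stmt19 (Cn F C : Set L → Set L)
    (hIncl : ∀ X : Set L, X ⊆ Cn X)
    (hMono : ∀ X Y : Set L, X ⊆ Y → Cn X ⊆ Cn Y)
    (hIdem : ∀ X : Set L, Cn (Cn X) = Cn X)
    (hCnCpt : ∀ (X : Set L) (x : L), x ∈ Cn X → ∃ A : Set L, A.Finite ∧ A ⊆ X ∧ x ∈ Cn A)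
    (hImp : ∃ imp : L → L → L, ∀ (a b : L) (X : Set L), b ∈ Cn (X ∪ {a}) ↔ imp a b ∈ Cn X)
    (hSup : FinSupra Cn F) (hLA : FinLeftAb Cn F) (hRA : FinRightAb Cn F)
    (hDed : FinDeduc Cn F) (hCum : FinCumul Cn F)
    (hC : ∀ X : Set L, C X = Cn (X ∪ ⋂ (B : Set L) (_ : B.Finite) (_ : B ⊆ Cn X), F B)) :
    Cumul Cn C := by
  obtain ⟨imp, himp⟩ := hImp
  intro X Y hY
  have cnle : ∀ {S T : Set L}, S ⊆ Cn T → Cn S ⊆ Cn T := by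
    intro S T h x hx
    have := hMono _ _ h hx
    rwa [hIdem] at this
  have hCX := hC X
  have hCXY := hC (X ∪ Y)
  set KX : Set L := ⋂ (B : Set L) (_ : B.Finite) (_ : B ⊆ Cn X), F B with hKXdef
  set KXY : Set L := ⋂ (B : Set L) (_ : B.Finite) (_ : B ⊆ Cn (X ∪ Y)), F B with hKXYdef
  have hmemKX : ∀ w : L, w ∈ KX ↔ ∀ B : Set L, B.Finite → B ⊆ Cn X → w ∈ F B := by
    intro w; rw [hKXdef]; simp only [mem_iInter]
  have hmemKXY : ∀ w : L, w ∈ KXY ↔ ∀ B : Set L, B.Finite → B ⊆ Cn (X ∪ Y) → w ∈ F B := by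
    intro w; rw [hKXYdef]; simp only [mem_iInter]
  -- Main lemma: K X ⊆ F E for every finite E ⊆ Cn (X ∪ K X).
  have hML : ∀ E : Set L, E.Finite → E ⊆ Cn (X ∪ KX) → KX ⊆ F E := by
    intro E hEfin hEsub
    have hch : ∀ e : L, ∃ A : Set L, A.Finite ∧ A ⊆ X ∪ KX ∧ (e ∈ E → e ∈ Cn A) := by
      intro e
      by_cases he : e ∈ E
      · obtain ⟨A, h1, h2, h3⟩ := hCnCpt _ e (hEsub he)
        exact ⟨A, h1, h2, fun _ => h3⟩
      · exact ⟨∅, finite_empty, empty_subset _, fun h => absurd h he⟩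
    choose A hA1 hA2 hA3 using hch
    set V : Set L := ⋃ e ∈ E, (A e ∩ X) with hVdef
    set Z : Set L := ⋃ e ∈ E, (A e \ X) with hZdef
    have hZfin : Z.Finite := hEfin.biUnion (fun e _ => (hA1 e).diff (t := X))
    have hVX : V ⊆ X := by
      intro x hx
      rw [hVdef] at hx
      simp only [mem_iUnion, mem_inter_iff, exists_prop] at hx
      obtain ⟨e, _, _, h⟩ := hx
      exact h
    have hZK : Z ⊆ KX := by
      intro x hx
      rw [hZdef] at hx
      simp only [mem_iUnion, mem_diff, exists_prop] at hx
      obtain ⟨e, he, hmem, hnx⟩ := hx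
      rcases hA2 e hmem with h | h
      · exact absurd h hnx
      · exact h
    have hEVZ : ∀ e ∈ E, e ∈ Cn (V ∪ Z) := by
      intro e he
      refine hMono (A e) _ ?_ (hA3 e he)
      intro x hx
      by_cases hxX : x ∈ X
      · exact Or.inl (by rw [hVdef]; exact mem_biUnion he ⟨hx, hxX⟩)
      · exact Or.inr (by rw [hZdef]; exact mem_biUnion he ⟨hx, hxX⟩)
    -- turn Z into a list
    set lZ : List L := hZfin.toFinset.toList with hlZdef
    have hlZ : {x : L | x ∈ lZ} = Z := by
      ext x
      simp [hlZdef, Finset.mem_toList, Set.Finite.mem_toFinset]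
    set D : Set L := (fun e => foldImp imp lZ e) '' E with hDdef
    have hDfin : D.Finite := hEfin.image _
    have hDX : D ⊆ Cn X := by
      rintro d ⟨e, he, rfl⟩
      have h1 : e ∈ Cn (V ∪ {x | x ∈ lZ}) := by rw [hlZ]; exact hEVZ e he
      have h2 := foldImp_intro imp Cn himp lZ V e h1
      exact hMono V X hVX h2
    have hDE : D ⊆ Cn E := by
      rintro d ⟨e, he, rfl⟩
      have h1 : e ∈ Cn ({e} ∪ {x | x ∈ lZ}) := by
        apply hIncl
        exact Or.inl rfl
      have h2 := foldImp_intro imp Cn himp lZ {e} e h1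
      exact hMono {e} E (by simpa using he) h2
    have hKFD : KX ⊆ F D := by
      intro w hw
      exact (hmemKX w).1 hw D hDfin hDX
    have hEFD : E ⊆ Cn (F D) := by
      intro e he
      have h1 : e ∈ Cn ({x | x ∈ lZ} ∪ {foldImp imp lZ e}) :=
        foldImp_elim imp Cn hIncl hMono hIdem himp lZ e
      refine cnle ?_ h1
      intro x hx
      rcases hx with hx | hx
      · rw [hlZ] at hx
        exact hIncl _ (hKFD (hZK hx))
      · simp only [mem_singleton_iff] at hx
        subst hx
        have : foldImp imp lZ e ∈ D := ⟨e, he, rfl⟩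
        exact hIncl _ (hSup D hDfin (hIncl D this))
    have h6 : Cn (F (D ∪ E)) = Cn (F D) := hCum D E hDfin hEfin hEFD
    have h7 : F (D ∪ E) = F E := by
      apply hRA (D ∪ E) E (hDfin.union hEfin) hEfin
      apply Subset.antisymm
      · apply cnle
        intro x hx
        rcases hx with hx | hx
        · exact hDE hx
        · exact hIncl E hx
      · exact hMono _ _ subset_union_right
    intro w hw
    have h8 : w ∈ Cn (F D) := hIncl _ (hKFD hw)
    rw [← h6, h7, hLA E hEfin] at h8
    exact h8
  -- Y ⊆ Cn (X ∪ KX)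
  have hYsub : Y ⊆ Cn (X ∪ KX) := by
    rw [hCX, hIdem] at hY
    exact hY
  -- K (X ∪ Y) = K X
  have hKeq : KXY = KX := by
    apply Subset.antisymm
    · intro w hw
      rw [hmemKX]
      intro B hBfin hBsub
      exact (hmemKXY w).1 hw B hBfin (hBsub.trans (hMono X (X ∪ Y) subset_union_left))
    · intro w hw
      rw [hmemKXY]
      intro B hBfin hBsub
      have hBsub' : B ⊆ Cn (X ∪ KX) := by
        refine hBsub.trans (cnle ?_)
        intro x hx
        rcases hx with hx | hx
        · exact hIncl _ (Or.inl hx)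
        · exact hYsub hx
      exact hML B hBfin hBsub' hw
  -- conclude
  rw [hCXY, hCX, hIdem, hIdem, hKeq]
  apply Subset.antisymm
  · apply cnle
    intro x hx
    rcases hx with hx | hx
    · rcases hx with hx | hx
      · exact hIncl _ (Or.inl hx)
      · exact hYsub hx
    · exact hIncl _ (Or.inr hx)
  · exact hMono _ _ (union_subset_union_left KX subset_union_left)


end DedNonmon
end
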